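/- arXiv:2301.05956 — 2 statements merged into one kernel-verified Lean document; each statement's English description precedes it below -/
import Mathlib

section
/- Let 𝒪 := ω + ζ·η + ω*. Then the completion of 𝒪 satisfies 𝒞(𝒪) ≅ ω + 𝟏 + (Σ_{r∈ℝ} T_r) + 𝟏 + ω*, where T_r := 𝟏 + ζ + 𝟏 if r ∈ ℚ and T_r := 𝟏 if r is irrational. -/
/-- A linear order is (Dedekind) complete if every nonempty subset bounded above has a
least upper bound. -/
def IsCompleteLO (α : Type*) [LinearOrder α] : Prop :=
  ∀ s : Set α, s.Nonempty → BddAbove s → ∃ a, IsLUB s a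

/-- `e : α ↪o β` exhibits `β` as a completion of `α`: `β` is complete and no proper
suborder of `β` containing (the image of) `α` is complete. -/
def IsCompletion {α β : Type*} [LinearOrder α] [LinearOrder β] (e : α ↪o β) : Prop :=
  IsCompleteLO β ∧ ∀ S : Set β, Set.range e ⊆ S → IsCompleteLO S → S = Set.univ

section Basic
variable {α C : Type*} [LinearOrder α] [LinearOrder C]

/-- glb existence from lub existence -/
lemma IsCompleteLO.exists_isGLB (h : IsCompleteLO C) (s : Set C) (hne : s.Nonempty)
    (hbdd : BddBelow s) : ∃ a, IsGLB s a := by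
  obtain ⟨b, hb⟩ := hbdd
  obtain ⟨a, ha⟩ := h (lowerBounds s) ⟨b, hb⟩ (hne.imp fun x hx y hy => hy hx)
  refine ⟨a, fun x hx => ha.2 fun y hy => hy hx, fun y hy => ha.1 hy⟩

lemma IsCompletion.exists_ge {e : α ↪o C} (h : IsCompletion e) (c : C) : ∃ a, c ≤ e a := by
  set S : Set C := {x | ∃ a, x ≤ e a} with hS
  have hsub : Set.range e ⊆ S := by rintro _ ⟨a, rfl⟩; exact ⟨a, le_rfl⟩
  have hcompl : IsCompleteLO ↥S := by
    intro s hne hbdd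
    obtain ⟨b, hb⟩ := hbdd
    obtain ⟨a₀, ha₀⟩ := b.2
    obtain ⟨c₀, hc₀⟩ := h.1 (Subtype.val '' s) (Set.Nonempty.image _ hne)
      ⟨b.1, by rintro _ ⟨x, hx, rfl⟩; exact hb hx⟩
    have hc₀S : c₀ ∈ S := ⟨a₀, le_trans (hc₀.2 (by rintro _ ⟨x, hx, rfl⟩; exact hb hx)) ha₀⟩
    refine ⟨⟨c₀, hc₀S⟩, fun x hx => ?_, fun y hy => ?_⟩
    · exact hc₀.1 ⟨x, hx, rfl⟩
    · exact hc₀.2 (by rintro _ ⟨x, hx, rfl⟩; exact hy hx)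
  have := h.2 S hsub hcompl
  have : c ∈ S := this ▸ Set.mem_univ c
  exact this

lemma IsCompletion.exists_le {e : α ↪o C} (h : IsCompletion e) (c : C) : ∃ a, e a ≤ c := by
  set S : Set C := {x | ∃ a, e a ≤ x} with hS
  have hsub : Set.range e ⊆ S := by rintro _ ⟨a, rfl⟩; exact ⟨a, le_rfl⟩
  have hcompl : IsCompleteLO ↥S := by
    intro s hne hbdd
    obtain ⟨b, hb⟩ := hbdd
    obtain ⟨x₀, hx₀⟩ := hne
    obtain ⟨a₀, ha₀⟩ := x₀.2
    obtain ⟨c₀, hc₀⟩ := h.1 (Subtype.val '' s) ⟨x₀.1, ⟨x₀, hx₀, rfl⟩⟩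
      ⟨b.1, by rintro _ ⟨x, hx, rfl⟩; exact hb hx⟩
    have hc₀S : c₀ ∈ S := ⟨a₀, le_trans ha₀ (hc₀.1 ⟨x₀, hx₀, rfl⟩)⟩
    refine ⟨⟨c₀, hc₀S⟩, fun x hx => ?_, fun y hy => ?_⟩
    · exact hc₀.1 ⟨x, hx, rfl⟩
    · exact hc₀.2 (by rintro _ ⟨x, hx, rfl⟩; exact hy hx)
  have := h.2 S hsub hcompl
  have : c ∈ S := this ▸ Set.mem_univ c
  exact this

end Basic

section SupInf
variable {α C : Type*} [LinearOrder α] [LinearOrder C]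

/-- `c` is the supremum of the range points below it. -/
def SupPt (e : α ↪o C) (c : C) : Prop := IsLUB (e '' {a | e a ≤ c}) c

/-- `c` is the infimum of the range points above it. -/
def InfPt (e : α ↪o C) (c : C) : Prop := IsGLB (e '' {a | c ≤ e a}) c

lemma supPt_range (e : α ↪o C) (a : α) : SupPt e (e a) :=
  IsGreatest.isLUB ⟨⟨a, le_rfl, rfl⟩, by rintro _ ⟨a', ha', rfl⟩; exact ha'⟩

lemma infPt_range (e : α ↪o C) (a : α) : InfPt e (e a) :=
  IsLeast.isGLB ⟨⟨a, le_rfl, rfl⟩, by rintro _ ⟨a', ha', rfl⟩; exact ha'⟩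

lemma IsCompletion.supPt_or_infPt {e : α ↪o C} (h : IsCompletion e) (c : C) :
    SupPt e c ∨ InfPt e c := by
  set S : Set C := {x | SupPt e x ∨ InfPt e x} with hS
  have hsub : Set.range e ⊆ S := by rintro _ ⟨a, rfl⟩; exact Or.inl (supPt_range e a)
  have hcompl : IsCompleteLO ↥S := by
    intro s hne hbdd
    obtain ⟨b, hb⟩ := hbdd
    obtain ⟨c₀, hc₀⟩ := h.1 (Subtype.val '' s) (Set.Nonempty.image _ hne)
      ⟨b.1, by rintro _ ⟨x, hx, rfl⟩; exact hb hx⟩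
    have hc₀S : c₀ ∈ S := by
      by_cases hsup : SupPt e c₀
      · exact Or.inl hsup
      · have hub : c₀ ∈ upperBounds (e '' {a | e a ≤ c₀}) := by
          rintro _ ⟨a', ha', rfl⟩; exact ha'
        have : ∃ b₀ ∈ upperBounds (e '' {a | e a ≤ c₀}), ¬ c₀ ≤ b₀ := by
          by_contra hcon
          push_neg at hcon
          exact hsup ⟨hub, fun y hy => hcon y hy⟩
        obtain ⟨b₀, hb₀, hb₀'⟩ := this
        replace hb₀' : b₀ < c₀ := lt_of_not_ge hb₀'
        have : ∃ t ∈ Subtype.val '' s, b₀ < t := by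
          by_contra hcon
          push_neg at hcon
          exact absurd (hc₀.2 fun y hy => hcon y hy) (not_le.2 hb₀')
        obtain ⟨t, htmem, htb₀⟩ := this
        have htc₀ : t ≤ c₀ := hc₀.1 htmem
        obtain ⟨⟨t', ht'S⟩, ht's, rfl⟩ := htmem
        rcases ht'S with hts | hti
        · exfalso
          have : t' ≤ b₀ := hts.2 (by
            rintro _ ⟨a', ha', rfl⟩
            exact hb₀ ⟨a', le_trans ha' htc₀, rfl⟩)
          exact absurd this (not_le.2 htb₀)
        · have hc₀t : c₀ ≤ t' := by
            refine hti.2 ?_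
            rintro _ ⟨a', ha', rfl⟩
            by_contra hcon
            push_neg at hcon
            have : e a' ≤ b₀ := hb₀ ⟨a', hcon.le, rfl⟩
            exact absurd (lt_of_lt_of_le htb₀ (le_trans ha' this)) (lt_irrefl _)
          have : t' = c₀ := le_antisymm htc₀ hc₀t
          exact Or.inr (this ▸ hti)
    refine ⟨⟨c₀, hc₀S⟩, fun x hx => ?_, fun y hy => ?_⟩
    · exact hc₀.1 ⟨x, hx, rfl⟩
    · exact hc₀.2 (by rintro _ ⟨x, hx, rfl⟩; exact hy hx)
  have huniv := h.2 S hsub hcompl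
  have : c ∈ S := huniv ▸ Set.mem_univ c
  exact this

end SupInf

section Transfer
variable {α C D : Type*} [LinearOrder α] [LinearOrder C] [LinearOrder D]

/-- If `c` is both a sup-point and an inf-point, then in any other completion the
sup and inf of the corresponding sets agree. -/
lemma coherence {e : α ↪o C} {e' : α ↪o D} (hD : IsCompletion e')
    {c : C} (hsc : SupPt e c) (hic : InfPt e c) {s i : D}
    (hls : IsLUB (e' '' {a | e a ≤ c}) s) (hgi : IsGLB (e' '' {a | c ≤ e a}) i) : s = i := by
  have hsi : s ≤ i := by
    refine hgi.2 ?_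
    rintro _ ⟨b, hb, rfl⟩
    refine hls.2 ?_
    rintro _ ⟨a, ha, rfl⟩
    exact e'.monotone (e.le_iff_le.1 (le_trans ha hb))
  by_cases hcr : ∃ x, e x = c
  · obtain ⟨x, rfl⟩ := hcr
    have hxs : s = e' x := le_antisymm
      (hls.2 (by rintro _ ⟨a, ha, rfl⟩; exact e'.monotone (e.le_iff_le.1 ha)))
      (hls.1 ⟨x, le_rfl, rfl⟩)
    have hxi : i = e' x := le_antisymm (hgi.1 ⟨x, le_rfl, rfl⟩)
      (hgi.2 (by rintro _ ⟨a, ha, rfl⟩; exact e'.monotone (e.le_iff_le.1 ha)))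
    rw [hxs, hxi]
  · push_neg at hcr
    by_contra hne
    have hslt : s < i := lt_of_le_of_ne hsi hne
    have nomid : ∀ a, e' a ≤ s ∨ i ≤ e' a := by
      intro a
      rcases le_total (e a) c with h | h
      · exact Or.inl (hls.1 ⟨a, h, rfl⟩)
      · exact Or.inr (hgi.1 ⟨a, h, rfl⟩)
    -- no point of D lies strictly between s and i
    have hIoo : ∀ x : D, ¬ (s < x ∧ x < i) := by
      set S₁ : Set D := {x | ¬ (s < x ∧ x < i)} with hS₁
      have hsub : Set.range e' ⊆ S₁ := by
        rintro _ ⟨a, rfl⟩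
        rcases nomid a with h | h
        · exact fun hx => absurd (lt_of_le_of_lt h hx.1) (lt_irrefl _)
        · exact fun hx => absurd (lt_of_lt_of_le hx.2 h) (lt_irrefl _)
      have hcompl : IsCompleteLO ↥S₁ := by
        intro u hne hbdd
        obtain ⟨b, hb⟩ := hbdd
        obtain ⟨d₀, hd₀⟩ := hD.1 (Subtype.val '' u) (Set.Nonempty.image _ hne)
          ⟨b.1, by rintro _ ⟨x, hx, rfl⟩; exact hb hx⟩
        by_cases hd₀S : d₀ ∈ S₁
        · refine ⟨⟨d₀, hd₀S⟩, fun x hx => hd₀.1 ⟨x, hx, rfl⟩, fun y hy => ?_⟩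
          exact hd₀.2 (by rintro _ ⟨x, hx, rfl⟩; exact hy hx)
        · simp only [hS₁, Set.mem_setOf_eq, not_not] at hd₀S
          have hsS : s ∈ S₁ := fun hx => absurd hx.1 (lt_irrefl _)
          refine ⟨⟨s, hsS⟩, fun x hx => ?_, fun y hy => ?_⟩
          · -- x ≤ s since x ≤ d₀ < i and x not in (s,i)
            have hxd : (x : D) ≤ d₀ := hd₀.1 ⟨x, hx, rfl⟩
            by_contra hcon
            exact x.2 ⟨lt_of_not_ge hcon, lt_of_le_of_lt hxd hd₀S.2⟩
          · have h2 : d₀ ≤ (y : D) := hd₀.2 (by rintro _ ⟨x, hx, rfl⟩; exact hy hx)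
            have h3 : s ≤ (y : D) := le_trans hd₀S.1.le h2
            exact h3
      have := hD.2 S₁ hsub hcompl
      intro x
      have : x ∈ S₁ := this ▸ Set.mem_univ x
      exact this
    -- i is not in the range of e'
    have hinr : ∀ b, e' b ≠ i := by
      intro b hb
      rcases nomid b with h | h
      · rw [hb] at h; exact absurd (lt_of_le_of_lt h hslt) (lt_irrefl _)
      · -- b is a minimum of {a | c ≤ e a}
        have hbB : c ≤ e b := by
          rcases le_total (e b) c with h' | h'
          · exact absurd (lt_of_le_of_lt (hb ▸ hls.1 ⟨b, h', rfl⟩) hslt) (lt_irrefl _)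
          · exact h'
        have hmin : ∀ b' , c ≤ e b' → b ≤ b' := by
          intro b' hb'
          have := hgi.1 ⟨b', hb', rfl⟩
          exact e'.le_iff_le.1 (hb ▸ this)
        have : IsLeast (e '' {a | c ≤ e a}) (e b) :=
          ⟨⟨b, hbB, rfl⟩, by rintro _ ⟨a, ha, rfl⟩; exact e.monotone (hmin a ha)⟩
        exact hcr b (hic.unique this.isGLB).symm
    -- remove i : contradiction with minimality
    have : ∀ x : D, x ≠ i := by
      set S₂ : Set D := {x | x ≠ i} with hS₂
      have hsub : Set.range e' ⊆ S₂ := by rintro _ ⟨a, rfl⟩; exact hinr a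
      have hcompl : IsCompleteLO ↥S₂ := by
        intro u hne hbdd
        obtain ⟨b, hb⟩ := hbdd
        obtain ⟨d₀, hd₀⟩ := hD.1 (Subtype.val '' u) (Set.Nonempty.image _ hne)
          ⟨b.1, by rintro _ ⟨x, hx, rfl⟩; exact hb hx⟩
        have hd₀S : d₀ ∈ S₂ := by
          intro hdi
          have : d₀ ≤ s := by
            refine hd₀.2 ?_
            rintro _ ⟨x, hx, rfl⟩
            by_contra hcon
            replace hcon : s < (x : D) := lt_of_not_ge hcon
            have hxi : (x : D) < i := lt_of_le_of_ne (hdi ▸ hd₀.1 ⟨x, hx, rfl⟩) x.2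
            exact hIoo x ⟨hcon, hxi⟩
          rw [hdi] at this
          exact absurd (lt_of_lt_of_le hslt this) (lt_irrefl _)
        refine ⟨⟨d₀, hd₀S⟩, fun x hx => hd₀.1 ⟨x, hx, rfl⟩, fun y hy => ?_⟩
        exact hd₀.2 (by rintro _ ⟨x, hx, rfl⟩; exact hy hx)
      have := hD.2 S₂ hsub hcompl
      intro x
      have : x ∈ S₂ := this ▸ Set.mem_univ x
      exact this
    exact this i rfl

end Transfer

section Transfer2
variable {α C D : Type*} [LinearOrder α] [LinearOrder C] [LinearOrder D]

lemma supPt_transfer {e : α ↪o C} {e' : α ↪o D} (hC : IsCompletion e)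
    {c : C} (hc : SupPt e c) {d : D} (hd : IsLUB (e' '' {a | e a ≤ c}) d) :
    {a | e' a ≤ d} = {a | e a ≤ c} := by
  ext a
  simp only [Set.mem_setOf_eq]
  constructor
  · intro ha
    by_contra hac
    replace hac : c < e a := lt_of_not_ge hac
    have h1 : e' a = d := le_antisymm ha (hd.2 (by
      rintro _ ⟨x, hx, rfl⟩
      exact e'.monotone (e.le_iff_le.1 (le_trans hx hac.le))))
    have norange : ∀ b, ¬ (c < e b ∧ e b < e a) := by
      rintro b ⟨hb1, hb2⟩
      have : d ≤ e' b := hd.2 (by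
        rintro _ ⟨x, hx, rfl⟩
        exact e'.monotone (e.le_iff_le.1 (le_trans hx hb1.le)))
      have : e a ≤ e b := e.monotone (e'.le_iff_le.1 (h1 ▸ this))
      exact absurd (lt_of_lt_of_le hb2 this) (lt_irrefl _)
    have cnr : ∀ x, e x ≠ c := by
      intro x hx
      have hub : e' x ∈ upperBounds (e' '' {a' | e a' ≤ c}) := by
        rintro _ ⟨y, hy, rfl⟩
        exact e'.monotone (e.le_iff_le.1 (hx ▸ hy))
      have : e' x = d := le_antisymm (hd.1 ⟨x, hx.le, rfl⟩) (hd.2 hub)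
      have : x = a := e'.injective (this.trans h1.symm)
      rw [this] at hx
      exact absurd (hx ▸ hac) (lt_irrefl _)
    have hIoo : ∀ y : C, ¬ (c < y ∧ y < e a) := by
      rintro y ⟨hy1, hy2⟩
      rcases hC.supPt_or_infPt y with hs | hi
      · have : y ≤ c := hs.2 (by
          rintro _ ⟨b, hb, rfl⟩
          by_contra hcon
          replace hcon : c < e b := lt_of_not_ge hcon
          exact norange b ⟨hcon, lt_of_le_of_lt hb hy2⟩)
        exact absurd (lt_of_lt_of_le hy1 this) (lt_irrefl _)
      · have : e a ≤ y := hi.2 (by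
          rintro _ ⟨b, hb, rfl⟩
          by_contra hcon
          replace hcon : e b < e a := lt_of_not_ge hcon
          exact norange b ⟨lt_of_lt_of_le hy1 hb, hcon⟩)
        exact absurd (lt_of_lt_of_le hy2 this) (lt_irrefl _)
    -- minimality of C applied to C \ {c}
    have : ∀ x : C, x ≠ c := by
      set S₂ : Set C := {x | x ≠ c} with hS₂
      have hsub : Set.range e ⊆ S₂ := by rintro _ ⟨x, rfl⟩; exact cnr x
      have hcompl : IsCompleteLO ↥S₂ := by
        intro u hne hbdd
        obtain ⟨b, hb⟩ := hbdd
        obtain ⟨d₀, hd₀⟩ := hC.1 (Subtype.val '' u) (Set.Nonempty.image _ hne)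
          ⟨b.1, by rintro _ ⟨x, hx, rfl⟩; exact hb hx⟩
        by_cases hd₀S : d₀ ∈ S₂
        · refine ⟨⟨d₀, hd₀S⟩, fun x hx => hd₀.1 ⟨x, hx, rfl⟩, fun y hy => ?_⟩
          exact hd₀.2 (by rintro _ ⟨x, hx, rfl⟩; exact hy hx)
        · simp only [hS₂, Set.mem_setOf_eq, not_not] at hd₀S
          have heaS : e a ∈ S₂ := cnr a
          refine ⟨⟨e a, heaS⟩, fun x hx => ?_, fun y hy => ?_⟩
          · have : (x : C) ≤ d₀ := hd₀.1 ⟨x, hx, rfl⟩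
            have h4 : (x : C) ≤ e a := le_trans this (hd₀S ▸ hac.le)
            exact h4
          · have h2 : d₀ ≤ (y : C) := hd₀.2 (by rintro _ ⟨x, hx, rfl⟩; exact hy hx)
            have h3 : c < (y : C) := lt_of_le_of_ne (hd₀S ▸ h2) (Ne.symm y.2)
            by_contra hcon
            replace hcon : (y : C) < e a := lt_of_not_ge hcon
            exact hIoo y ⟨h3, hcon⟩
      have := hC.2 S₂ hsub hcompl
      intro x
      have : x ∈ S₂ := this ▸ Set.mem_univ x
      exact this
    exact this c rfl
  · intro ha
    exact hd.1 ⟨a, ha, rfl⟩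

lemma infPt_transfer {e : α ↪o C} {e' : α ↪o D} (hC : IsCompletion e)
    {c : C} (hc : InfPt e c) {d : D} (hd : IsGLB (e' '' {a | c ≤ e a}) d) :
    {a | d ≤ e' a} = {a | c ≤ e a} := by
  ext a
  simp only [Set.mem_setOf_eq]
  constructor
  · intro ha
    by_contra hac
    replace hac : e a < c := lt_of_not_ge hac
    have h1 : e' a = d := le_antisymm (hd.2 (by
      rintro _ ⟨x, hx, rfl⟩
      exact e'.monotone (e.le_iff_le.1 (le_trans hac.le hx)))) ha
    have norange : ∀ b, ¬ (e a < e b ∧ e b < c) := by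
      rintro b ⟨hb1, hb2⟩
      have : e' b ≤ d := hd.2 (by
        rintro _ ⟨x, hx, rfl⟩
        exact e'.monotone (e.le_iff_le.1 (le_trans hb2.le hx)))
      have : e b ≤ e a := e.monotone (e'.le_iff_le.1 (h1 ▸ this))
      exact absurd (lt_of_le_of_lt this hb1) (lt_irrefl _)
    have cnr : ∀ x, e x ≠ c := by
      intro x hx
      have hlb : e' x ∈ lowerBounds (e' '' {a' | c ≤ e a'}) := by
        rintro _ ⟨y, hy, rfl⟩
        exact e'.monotone (e.le_iff_le.1 (hx ▸ hy))
      have : e' x = d := le_antisymm (hd.2 hlb) (hd.1 ⟨x, hx.ge, rfl⟩)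
      have : x = a := e'.injective (this.trans h1.symm)
      rw [this] at hx
      exact absurd (hx ▸ hac) (lt_irrefl _)
    have hIoo : ∀ y : C, ¬ (e a < y ∧ y < c) := by
      rintro y ⟨hy1, hy2⟩
      rcases hC.supPt_or_infPt y with hs | hi
      · have : y ≤ e a := hs.2 (by
          rintro _ ⟨b, hb, rfl⟩
          by_contra hcon
          replace hcon : e a < e b := lt_of_not_ge hcon
          exact norange b ⟨hcon, lt_of_le_of_lt hb hy2⟩)
        exact absurd (lt_of_lt_of_le hy1 this) (lt_irrefl _)
      · have : c ≤ y := hi.2 (by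
          rintro _ ⟨b, hb, rfl⟩
          by_contra hcon
          replace hcon : e b < c := lt_of_not_ge hcon
          exact norange b ⟨lt_of_lt_of_le hy1 hb, hcon⟩)
        exact absurd (lt_of_lt_of_le hy2 this) (lt_irrefl _)
    have : ∀ x : C, x ≠ c := by
      set S₂ : Set C := {x | x ≠ c} with hS₂
      have hsub : Set.range e ⊆ S₂ := by rintro _ ⟨x, rfl⟩; exact cnr x
      have hcompl : IsCompleteLO ↥S₂ := by
        intro u hne hbdd
        obtain ⟨b, hb⟩ := hbdd
        obtain ⟨d₀, hd₀⟩ := hC.1 (Subtype.val '' u) (Set.Nonempty.image _ hne)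
          ⟨b.1, by rintro _ ⟨x, hx, rfl⟩; exact hb hx⟩
        by_cases hd₀S : d₀ ∈ S₂
        · refine ⟨⟨d₀, hd₀S⟩, fun x hx => hd₀.1 ⟨x, hx, rfl⟩, fun y hy => ?_⟩
          exact hd₀.2 (by rintro _ ⟨x, hx, rfl⟩; exact hy hx)
        · simp only [hS₂, Set.mem_setOf_eq, not_not] at hd₀S
          have heaS : e a ∈ S₂ := cnr a
          refine ⟨⟨e a, heaS⟩, fun x hx => ?_, fun y hy => ?_⟩
          · -- every element of u is ≤ e a : else it lies in (e a, c)
            have hxd : (x : C) ≤ d₀ := hd₀.1 ⟨x, hx, rfl⟩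
            by_contra hcon
            replace hcon : e a < (x : C) := lt_of_not_ge hcon
            have : (x : C) < c := lt_of_le_of_ne (hd₀S ▸ hxd) x.2
            exact hIoo x ⟨hcon, this⟩
          · have h2 : d₀ ≤ (y : C) := hd₀.2 (by rintro _ ⟨x, hx, rfl⟩; exact hy hx)
            have h3 : e a ≤ (y : C) := le_trans hac.le (hd₀S ▸ h2)
            exact h3
      have := hC.2 S₂ hsub hcompl
      intro x
      have : x ∈ S₂ := this ▸ Set.mem_univ x
      exact this
    exact this c rfl
  · intro ha
    exact hd.1 ⟨a, ha, rfl⟩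

end Transfer2

section Unique
variable {α C D : Type*} [LinearOrder α] [LinearOrder C] [LinearOrder D]

lemma transfer_spec {e : α ↪o C} {e' : α ↪o D} (hC : IsCompletion e) (hD : IsCompletion e')
    (c : C) : ∃ d : D, (SupPt e c → IsLUB (e' '' {a | e a ≤ c}) d) ∧
      (InfPt e c → IsGLB (e' '' {a | c ≤ e a}) d) := by
  obtain ⟨a₁, ha₁⟩ := hC.exists_le c
  obtain ⟨a₂, ha₂⟩ := hC.exists_ge c
  have hlub : ∃ d, IsLUB (e' '' {a | e a ≤ c}) d := by
    refine hD.1 _ ⟨e' a₁, ⟨a₁, ha₁, rfl⟩⟩ ⟨e' a₂, ?_⟩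
    rintro _ ⟨x, hx, rfl⟩
    exact e'.monotone (e.le_iff_le.1 (le_trans hx ha₂))
  have hglb : ∃ d, IsGLB (e' '' {a | c ≤ e a}) d := by
    refine hD.1.exists_isGLB _ ⟨e' a₂, ⟨a₂, ha₂, rfl⟩⟩ ⟨e' a₁, ?_⟩
    rintro _ ⟨x, hx, rfl⟩
    exact e'.monotone (e.le_iff_le.1 (le_trans ha₁ hx))
  obtain ⟨d₁, hd₁⟩ := hlub
  obtain ⟨d₂, hd₂⟩ := hglb
  by_cases hs : SupPt e c
  · by_cases hi : InfPt e c
    · exact ⟨d₁, fun _ => hd₁, fun _ => (coherence hD hs hi hd₁ hd₂) ▸ hd₂⟩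
    · exact ⟨d₁, fun _ => hd₁, fun h => absurd h hi⟩
  · exact ⟨d₂, fun h => absurd h hs, fun _ => hd₂⟩

theorem completion_unique {e : α ↪o C} {e' : α ↪o D} (hC : IsCompletion e)
    (hD : IsCompletion e') : Nonempty (C ≃o D) := by
  choose F hF1 hF2 using transfer_spec hC hD
  choose G hG1 hG2 using transfer_spec hD hC
  have gf : ∀ c, G (F c) = c := by
    intro c
    rcases hC.supPt_or_infPt c with hs | hi
    · have hF := hF1 c hs
      have hset := supPt_transfer hC hs hF
      have hsup' : SupPt e' (F c) := by unfold SupPt; rw [hset]; exact hF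
      have := hG1 (F c) hsup'
      rw [hset] at this
      exact (hs.unique this).symm
    · have hF := hF2 c hi
      have hset := infPt_transfer hC hi hF
      have hinf' : InfPt e' (F c) := by unfold InfPt; rw [hset]; exact hF
      have := hG2 (F c) hinf'
      rw [hset] at this
      exact (hi.unique this).symm
  have fg : ∀ d, F (G d) = d := by
    intro d
    rcases hD.supPt_or_infPt d with hs | hi
    · have hG := hG1 d hs
      have hset := supPt_transfer hD hs hG
      have hsup' : SupPt e (G d) := by unfold SupPt; rw [hset]; exact hG
      have := hF1 (G d) hsup'
      rw [hset] at this
      exact (hs.unique this).symm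
    · have hG := hG2 d hi
      have hset := infPt_transfer hD hi hG
      have hinf' : InfPt e (G d) := by unfold InfPt; rw [hset]; exact hG
      have := hF2 (G d) hinf'
      rw [hset] at this
      exact (hi.unique this).symm
  have Fmono : ∀ c c' : C, c ≤ c' → F c ≤ F c' := by
    intro c c' hcc
    rcases eq_or_lt_of_le hcc with rfl | hlt
    · exact le_rfl
    rcases hC.supPt_or_infPt c with hs | hi <;> rcases hC.supPt_or_infPt c' with hs' | hi'
    · exact (hF1 c hs).2 fun x hx => (hF1 c' hs').1 (by
        obtain ⟨a, ha, rfl⟩ := hx; exact ⟨a, le_trans ha hcc, rfl⟩)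
    · refine (hF2 c' hi').2 ?_
      rintro _ ⟨b, hb, rfl⟩
      refine (hF1 c hs).2 ?_
      rintro _ ⟨a, ha, rfl⟩
      exact e'.monotone (e.le_iff_le.1 (le_trans ha (le_trans hcc hb)))
    · -- c inf-point, c' sup-point : find a range point in [c, c']
      have : ∃ a₀, c ≤ e a₀ ∧ e a₀ ≤ c' := by
        by_contra hcon
        push_neg at hcon
        have : c' ≤ c := hs'.2 (by
          rintro _ ⟨a, ha, rfl⟩
          rcases le_total c (e a) with h | h
          · exact absurd ha (not_le.2 (hcon a h))
          · exact h)
        exact absurd (lt_of_lt_of_le hlt this) (lt_irrefl _)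
      obtain ⟨a₀, ha₀1, ha₀2⟩ := this
      calc F c ≤ e' a₀ := (hF2 c hi).1 ⟨a₀, ha₀1, rfl⟩
        _ ≤ F c' := (hF1 c' hs').1 ⟨a₀, ha₀2, rfl⟩
    · refine (hF2 c' hi').2 ?_
      rintro _ ⟨b, hb, rfl⟩
      exact (hF2 c hi).1 ⟨b, le_trans hcc hb, rfl⟩
  have Gmono : ∀ d d' : D, d ≤ d' → G d ≤ G d' := by
    intro d d' hdd
    rcases eq_or_lt_of_le hdd with rfl | hlt
    · exact le_rfl
    rcases hD.supPt_or_infPt d with hs | hi <;> rcases hD.supPt_or_infPt d' with hs' | hi'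
    · exact (hG1 d hs).2 fun x hx => (hG1 d' hs').1 (by
        obtain ⟨a, ha, rfl⟩ := hx; exact ⟨a, le_trans ha hdd, rfl⟩)
    · refine (hG2 d' hi').2 ?_
      rintro _ ⟨b, hb, rfl⟩
      refine (hG1 d hs).2 ?_
      rintro _ ⟨a, ha, rfl⟩
      exact e.monotone (e'.le_iff_le.1 (le_trans ha (le_trans hdd hb)))
    · have : ∃ a₀, d ≤ e' a₀ ∧ e' a₀ ≤ d' := by
        by_contra hcon
        push_neg at hcon
        have : d' ≤ d := hs'.2 (by
          rintro _ ⟨a, ha, rfl⟩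
          rcases le_total d (e' a) with h | h
          · exact absurd ha (not_le.2 (hcon a h))
          · exact h)
        exact absurd (lt_of_lt_of_le hlt this) (lt_irrefl _)
      obtain ⟨a₀, ha₀1, ha₀2⟩ := this
      calc G d ≤ e a₀ := (hG2 d hi).1 ⟨a₀, ha₀1, rfl⟩
        _ ≤ G d' := (hG1 d' hs').1 ⟨a₀, ha₀2, rfl⟩
    · refine (hG2 d' hi').2 ?_
      rintro _ ⟨b, hb, rfl⟩
      exact (hG2 d hi).1 ⟨b, le_trans hdd hb, rfl⟩
  refine ⟨⟨⟨F, G, gf, fg⟩, ?_⟩⟩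
  intro c c'
  constructor
  · intro h
    have h2 := Gmono _ _ h
    simp only [Equiv.coe_fn_mk] at h2
    rwa [gf, gf] at h2
  · exact Fmono c c'
end Unique

section CompletePieces
variable {A B : Type*} [LinearOrder A] [LinearOrder B]

lemma isCompleteLO_of_cclo (β : Type*) [ConditionallyCompleteLinearOrder β] :
    IsCompleteLO β := fun s hne hbdd => ⟨sSup s, isLUB_csSup hne hbdd⟩

lemma isCompleteLO_punit : IsCompleteLO PUnit := by
  rintro s ⟨x, hx⟩ _
  exact ⟨x, fun y hy => (Subsingleton.elim y x).le, fun y _ => (Subsingleton.elim x y).le⟩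

lemma isCompleteLO_congr {β γ : Type*} [LinearOrder β] [LinearOrder γ] (φ : β ≃o γ)
    (h : IsCompleteLO β) : IsCompleteLO γ := by
  intro s hne hbdd
  obtain ⟨x, hx⟩ := hne
  obtain ⟨b, hb⟩ := hbdd
  obtain ⟨a, ha⟩ := h (φ.symm '' s) ⟨φ.symm x, ⟨x, hx, rfl⟩⟩
    ⟨φ.symm b, by rintro _ ⟨y, hy, rfl⟩; exact φ.symm.monotone (hb hy)⟩
  refine ⟨φ a, ?_⟩
  have : s = φ '' (φ.symm '' s) := by
    rw [Set.image_image]; simp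
  rw [this]
  exact φ.isLUB_image'.2 ha

lemma eq_toLex_of_ofLex_eq {A B : Type*} {x : A ⊕ₗ B} {y : A ⊕ B} (h : ofLex x = y) :
    x = toLex y := by rw [← h]; rfl

lemma sumLex_complete (hA : IsCompleteLO A) (hB : IsCompleteLO B)
    (h : (∃ m : A, ∀ a, a ≤ m) ∨ (∃ m : B, ∀ b, m ≤ b)) : IsCompleteLO (A ⊕ₗ B) := by
  intro s hne hbdd
  obtain ⟨bb, hbb⟩ := hbdd
  set sB : Set B := {b | toLex (Sum.inr b) ∈ s} with hsB
  by_cases hBne : sB.Nonempty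
  · obtain ⟨x₀, hx₀⟩ := hBne
    rcases hbbeq : ofLex bb with a | b
    · exfalso
      have h1 : bb = toLex (Sum.inl a) := eq_toLex_of_ofLex_eq hbbeq
      have h2 := hbb hx₀
      rw [h1] at h2
      exact Sum.Lex.not_inr_le_inl h2
    · have h1 : bb = toLex (Sum.inr b) := eq_toLex_of_ofLex_eq hbbeq
      obtain ⟨bs, hbs⟩ := hB sB ⟨x₀, hx₀⟩
        ⟨b, fun x hx => Sum.Lex.inr_le_inr_iff.1 (h1 ▸ hbb hx)⟩
      refine ⟨toLex (Sum.inr bs), ?_, ?_⟩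
      · intro x hx
        rcases hxeq : ofLex x with a' | b'
        · have h2 : x = toLex (Sum.inl a') := eq_toLex_of_ofLex_eq hxeq
          rw [h2]
          exact Sum.Lex.inl_le_inr _ _
        · have h2 : x = toLex (Sum.inr b') := eq_toLex_of_ofLex_eq hxeq
          rw [h2]
          exact Sum.Lex.inr_le_inr_iff.2 (hbs.1 (show b' ∈ sB from by show toLex (Sum.inr b') ∈ s; rw [← h2]; exact hx))
      · intro y hy
        rcases hyeq : ofLex y with a' | b'
        · exfalso
          have h2 : y = toLex (Sum.inl a') := eq_toLex_of_ofLex_eq hyeq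
          have h3 := hy hx₀
          rw [h2] at h3
          exact Sum.Lex.not_inr_le_inl h3
        · have h2 : y = toLex (Sum.inr b') := eq_toLex_of_ofLex_eq hyeq
          rw [h2]
          refine Sum.Lex.inr_le_inr_iff.2 (hbs.2 fun z hz => ?_)
          exact Sum.Lex.inr_le_inr_iff.1 (h2 ▸ hy hz)
  · set sA : Set A := {a | toLex (Sum.inl a) ∈ s} with hsA
    have hAne : sA.Nonempty := by
      obtain ⟨x, hx⟩ := hne
      rcases hxeq : ofLex x with a' | b'
      · exact ⟨a', show toLex (Sum.inl a') ∈ s from by rw [← eq_toLex_of_ofLex_eq hxeq]; exact hx⟩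
      · exact absurd ⟨b', show toLex (Sum.inr b') ∈ s from by rw [← eq_toLex_of_ofLex_eq hxeq]; exact hx⟩ hBne
    have hub : ∀ y, y ∈ upperBounds s → ∀ (a' : A), ofLex y = Sum.inl a' → a' ∈ upperBounds sA := by
      intro y hy a' hyeq z hz
      have h2 : y = toLex (Sum.inl a') := eq_toLex_of_ofLex_eq hyeq
      have h3 := hy hz
      rw [h2] at h3
      exact Sum.Lex.inl_le_inl_iff.1 h3
    have hubs : ∀ x ∈ s, ∀ (a' : A), ofLex x = Sum.inl a' → x = toLex (Sum.inl a') :=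
      fun x _ a' hxeq => eq_toLex_of_ofLex_eq hxeq
    by_cases hAb : BddAbove sA
    · obtain ⟨as, has⟩ := hA sA hAne hAb
      refine ⟨toLex (Sum.inl as), ?_, ?_⟩
      · intro x hx
        rcases hxeq : ofLex x with a' | b'
        · rw [hubs x hx a' hxeq]
          exact Sum.Lex.inl_le_inl_iff.2 (has.1 (show toLex (Sum.inl a') ∈ s from by rw [← eq_toLex_of_ofLex_eq hxeq]; exact hx))
        · exact absurd ⟨b', show toLex (Sum.inr b') ∈ s from by rw [← eq_toLex_of_ofLex_eq hxeq]; exact hx⟩ hBne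
      · intro y hy
        rcases hyeq : ofLex y with a' | b'
        · rw [(eq_toLex_of_ofLex_eq hyeq : y = toLex (Sum.inl a'))]
          exact Sum.Lex.inl_le_inl_iff.2 (has.2 (hub y hy a' hyeq))
        · rw [(eq_toLex_of_ofLex_eq hyeq : y = toLex (Sum.inr b'))]
          exact Sum.Lex.inl_le_inr _ _
    · rcases h with ⟨m, hm⟩ | ⟨m, hm⟩
      · exact absurd ⟨m, fun x _ => hm x⟩ hAb
      · refine ⟨toLex (Sum.inr m), ?_, ?_⟩
        · intro x hx
          rcases hxeq : ofLex x with a' | b'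
          · rw [(eq_toLex_of_ofLex_eq hxeq : x = toLex (Sum.inl a'))]
            exact Sum.Lex.inl_le_inr _ _
          · exact absurd ⟨b', show toLex (Sum.inr b') ∈ s from by rw [← eq_toLex_of_ofLex_eq hxeq]; exact hx⟩ hBne
        · intro y hy
          rcases hyeq : ofLex y with a' | b'
          · exact absurd ⟨a', hub y hy a' hyeq⟩ hAb
          · rw [(eq_toLex_of_ofLex_eq hyeq : y = toLex (Sum.inr b'))]
            exact Sum.Lex.inr_le_inr_iff.2 (hm b')
end CompletePieces

section SigmaComplete
variable {ι : Type*} {T : ι → Type*}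

lemma sigmaLex_le_left [LinearOrder ι] [∀ i, LinearOrder (T i)] {i j : ι} (a : T i) (b : T j)
    (h : i < j) : (toLex ⟨i, a⟩ : Σₗ i, T i) ≤ toLex ⟨j, b⟩ := Sigma.Lex.left a b h

lemma sigmaLex_lt_left [LinearOrder ι] [∀ i, LinearOrder (T i)] {i j : ι} (a : T i) (b : T j)
    (h : i < j) : (toLex ⟨i, a⟩ : Σₗ i, T i) < toLex ⟨j, b⟩ := Sigma.Lex.left a b h

lemma sigmaLex_le_right [LinearOrder ι] [∀ i, LinearOrder (T i)] {i : ι} (a b : T i)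
    (h : a ≤ b) : (toLex ⟨i, a⟩ : Σₗ i, T i) ≤ toLex ⟨i, b⟩ := Sigma.Lex.right a b h

lemma sigmaLex_lt_right [LinearOrder ι] [∀ i, LinearOrder (T i)] {i : ι} (a b : T i)
    (h : a < b) : (toLex ⟨i, a⟩ : Σₗ i, T i) < toLex ⟨i, b⟩ := Sigma.Lex.right a b h

lemma sigmaLex_le_elim [LinearOrder ι] [∀ i, LinearOrder (T i)] {i j : ι} {a : T i} {b : T j}
    (h : (toLex ⟨i, a⟩ : Σₗ i, T i) ≤ toLex ⟨j, b⟩) :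
    i < j ∨ ∃ h : i = j, h.rec a ≤ b := Sigma.lex_iff.1 h

lemma sigmaLex_lt_elim [LinearOrder ι] [∀ i, LinearOrder (T i)] {i j : ι} {a : T i} {b : T j}
    (h : (toLex ⟨i, a⟩ : Σₗ i, T i) < toLex ⟨j, b⟩) :
    i < j ∨ ∃ h : i = j, h.rec a < b := Sigma.lex_iff.1 h

lemma sigmaLex_complete [ConditionallyCompleteLinearOrder ι] [∀ i, LinearOrder (T i)]
    (hc : ∀ i, IsCompleteLO (T i)) (hbot : ∀ i, ∃ b : T i, ∀ t, b ≤ t)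
    (htop : ∀ i, ∃ m : T i, ∀ t, t ≤ m) : IsCompleteLO (Σₗ i, T i) := by
  intro s hne hbdd
  obtain ⟨x₀, hx₀⟩ := hne
  obtain ⟨bb, hbb⟩ := hbdd
  set J : Set ι := {i | ∃ t, (toLex ⟨i, t⟩ : Σₗ i, T i) ∈ s} with hJ
  have hx₀eq : toLex ⟨(ofLex x₀).1, (ofLex x₀).2⟩ = x₀ := rfl
  have hJne : (ofLex x₀).1 ∈ J := ⟨(ofLex x₀).2, by rw [hx₀eq]; exact hx₀⟩
  have hJbdd : BddAbove J := by
    refine ⟨(ofLex bb).1, ?_⟩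
    rintro i ⟨t, ht⟩
    have h1 : (toLex ⟨i, t⟩ : Σₗ i, T i) ≤ toLex ⟨(ofLex bb).1, (ofLex bb).2⟩ := hbb ht
    rcases sigmaLex_le_elim h1 with h | ⟨h, _⟩
    · exact h.le
    · exact h.le
  set j := sSup J with hj
  have hjub : ∀ i ∈ J, i ≤ j := fun i hi => le_csSup hJbdd hi
  have keyub : ∀ (i) (t : T i), (∀ x ∈ s, x ≤ toLex ⟨i, t⟩) → j ≤ i := by
    intro i t hub
    refine csSup_le ⟨_, hJne⟩ ?_
    rintro i' ⟨t', ht'⟩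
    rcases sigmaLex_le_elim (hub _ ht') with h | ⟨h, _⟩
    · exact h.le
    · exact h.le
  by_cases hjJ : j ∈ J
  · set sj : Set (T j) := {t | (toLex ⟨j, t⟩ : Σₗ i, T i) ∈ s} with hsj
    obtain ⟨mt, hmt⟩ := htop j
    obtain ⟨τ, hτ⟩ := hc j sj hjJ ⟨mt, fun t _ => hmt t⟩
    refine ⟨toLex ⟨j, τ⟩, ?_, ?_⟩
    · intro x hx
      have hxeq : toLex ⟨(ofLex x).1, (ofLex x).2⟩ = x := rfl
      rw [← hxeq] at hx ⊢
      revert hx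
      generalize ofLex x = p
      obtain ⟨i, t⟩ := p
      intro hx
      rcases lt_or_eq_of_le (hjub _ ⟨t, hx⟩) with h | h
      · exact sigmaLex_le_left _ _ h
      · subst h
        exact sigmaLex_le_right _ _ (hτ.1 hx)
    · intro y hy
      have hyeq : toLex ⟨(ofLex y).1, (ofLex y).2⟩ = y := rfl
      rw [← hyeq] at hy ⊢
      revert hy
      generalize ofLex y = p
      obtain ⟨i, t⟩ := p
      intro hy
      have hji : j ≤ i := keyub _ _ fun x hx => hy hx
      rcases lt_or_eq_of_le hji with h | h
      · exact sigmaLex_le_left _ _ h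
      · subst h
        refine sigmaLex_le_right _ _ (hτ.2 ?_)
        intro t' ht'
        rcases sigmaLex_le_elim (hy ht') with h' | ⟨h', hle⟩
        · exact absurd h' (lt_irrefl _)
        · exact hle
  · obtain ⟨bt, hbt⟩ := hbot j
    refine ⟨toLex ⟨j, bt⟩, ?_, ?_⟩
    · intro x hx
      have hxeq : toLex ⟨(ofLex x).1, (ofLex x).2⟩ = x := rfl
      rw [← hxeq] at hx ⊢
      revert hx
      generalize ofLex x = p
      obtain ⟨i, t⟩ := p
      intro hx
      rcases lt_or_eq_of_le (hjub _ ⟨t, hx⟩) with h | h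
      · exact sigmaLex_le_left _ _ h
      · exact absurd (h ▸ (⟨t, hx⟩ : i ∈ J)) hjJ
    · intro y hy
      have hyeq : toLex ⟨(ofLex y).1, (ofLex y).2⟩ = y := rfl
      rw [← hyeq] at hy ⊢
      revert hy
      generalize ofLex y = p
      obtain ⟨i, t⟩ := p
      intro hy
      have hji : j ≤ i := keyub _ _ fun x hx => hy hx
      rcases lt_or_eq_of_le hji with h | h
      · exact sigmaLex_le_left _ _ h
      · subst h
        exact sigmaLex_le_right _ _ (hbt t)
end SigmaComplete

section Dense
variable {α D : Type*} [LinearOrder α] [LinearOrder D]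

lemma isCompletion_of (e' : α ↪o D) (hcomp : IsCompleteLO D)
    (hdense : ∀ d : D, (∃ a, e' a = d) ∨
      ((∃ a, e' a < d) ∧ (∃ a, d < e' a) ∧
       (∀ b, b < d → ∃ a, b < e' a ∧ e' a < d) ∧
       (∀ b, d < b → ∃ a, d < e' a ∧ e' a < b))) : IsCompletion e' := by
  refine ⟨hcomp, fun S hS hSc => ?_⟩
  rw [Set.eq_univ_iff_forall]
  intro d
  rcases hdense d with ⟨a, rfl⟩ | ⟨⟨a1, ha1⟩, ⟨a2, ha2⟩, h3, h4⟩
  · exact hS ⟨a, rfl⟩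
  by_contra hdS
  set u : Set ↥S := {x | (x : D) ∈ Set.range ⇑e' ∧ (x : D) < d} with hu
  have hune : u.Nonempty := ⟨⟨e' a1, hS ⟨a1, rfl⟩⟩, ⟨a1, rfl⟩, ha1⟩
  have hubdd : BddAbove u := by
    refine ⟨⟨e' a2, hS ⟨a2, rfl⟩⟩, fun x hx => ?_⟩
    have : (x : D) ≤ e' a2 := le_of_lt (lt_trans hx.2 ha2)
    exact this
  obtain ⟨σ, hσ⟩ := hSc u hune hubdd
  have hdσ : d ≤ (σ : D) := by
    by_contra hcon
    replace hcon : (σ : D) < d := lt_of_not_ge hcon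
    obtain ⟨a, hb1, hb2⟩ := h3 (σ : D) hcon
    have : e' a ≤ (σ : D) := hσ.1 (show (⟨e' a, hS ⟨a, rfl⟩⟩ : ↥S) ∈ u from ⟨⟨a, rfl⟩, hb2⟩)
    exact absurd (lt_of_le_of_lt this hb1) (lt_irrefl _)
  have hne : (σ : D) ≠ d := fun h => hdS (h ▸ σ.2)
  have hlt : d < (σ : D) := lt_of_le_of_ne hdσ (Ne.symm hne)
  obtain ⟨a, ha1', ha2'⟩ := h4 (σ : D) hlt
  have hyub : (⟨e' a, hS ⟨a, rfl⟩⟩ : ↥S) ∈ upperBounds u := by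
    rintro x ⟨hx1, hx2⟩
    have : (x : D) ≤ e' a := le_of_lt (lt_trans hx2 ha1')
    exact this
  have : (σ : D) ≤ e' a := hσ.2 hyub
  exact absurd (lt_of_le_of_lt this ha2') (lt_irrefl _)

end Dense

section Concrete

abbrev PP : Type := PUnit ⊕ₗ ℤ ⊕ₗ PUnit

def ppBot : PP := toLex (Sum.inl PUnit.unit)
def ppMid (z : ℤ) : PP := toLex (Sum.inr (toLex (Sum.inl z)))
def ppTop : PP := toLex (Sum.inr (toLex (Sum.inr PUnit.unit)))

lemma punit_le (u v : PUnit) : u ≤ v := (Subsingleton.elim u v).le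
lemma punit_le_one (u : PUnit) : u ≤ PUnit.unit := punit_le u PUnit.unit
lemma punit_one_le (u : PUnit) : PUnit.unit ≤ u := punit_le PUnit.unit u

lemma sumLex_bot_le {A B : Type*} [LinearOrder A] [LinearOrder B] {m : A} (hm : ∀ a, m ≤ a)
    (x : A ⊕ₗ B) : toLex (Sum.inl m) ≤ x := by
  rcases h : ofLex x with a | b
  · rw [eq_toLex_of_ofLex_eq h]; exact Sum.Lex.inl_le_inl_iff.2 (hm a)
  · rw [eq_toLex_of_ofLex_eq h]; exact Sum.Lex.inl_le_inr _ _

lemma sumLex_le_top {A B : Type*} [LinearOrder A] [LinearOrder B] {m : B} (hm : ∀ b, b ≤ m)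
    (x : A ⊕ₗ B) : x ≤ toLex (Sum.inr m) := by
  rcases h : ofLex x with a | b
  · rw [eq_toLex_of_ofLex_eq h]; exact Sum.Lex.inl_le_inr _ _
  · rw [eq_toLex_of_ofLex_eq h]; exact Sum.Lex.inr_le_inr_iff.2 (hm b)

lemma ppBot_le (p : PP) : ppBot ≤ p := sumLex_bot_le punit_one_le p

lemma pp_le_top (p : PP) : p ≤ ppTop := sumLex_le_top (fun b => sumLex_le_top punit_le_one b) p

lemma ppBot_lt_mid (z : ℤ) : ppBot < ppMid z := Sum.Lex.inl_lt_inr _ _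

lemma ppMid_lt_top (z : ℤ) : ppMid z < ppTop := Sum.Lex.inr_lt_inr_iff.2 (Sum.Lex.inl_lt_inr _ _)

lemma ppBot_lt_top : ppBot < ppTop := Sum.Lex.inl_lt_inr _ _

lemma ppMid_lt_mid {z z' : ℤ} : ppMid z < ppMid z' ↔ z < z' :=
  Sum.Lex.inr_lt_inr_iff.trans Sum.Lex.inl_lt_inl_iff

lemma pp_cases (p : PP) : p = ppBot ∨ (∃ z, p = ppMid z) ∨ p = ppTop := by
  rcases h : ofLex p with u | y
  · cases u; exact Or.inl (eq_toLex_of_ofLex_eq h)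
  · rcases h2 : ofLex y with z | u
    · refine Or.inr (Or.inl ⟨z, ?_⟩)
      rw [eq_toLex_of_ofLex_eq h, eq_toLex_of_ofLex_eq h2]; rfl
    · cases u
      refine Or.inr (Or.inr ?_)
      rw [eq_toLex_of_ofLex_eq h, eq_toLex_of_ofLex_eq h2]; rfl

lemma pp_complete : IsCompleteLO PP :=
  sumLex_complete isCompleteLO_punit
    (sumLex_complete (isCompleteLO_of_cclo ℤ) isCompleteLO_punit
      (Or.inr ⟨PUnit.unit, punit_one_le⟩))
    (Or.inl ⟨PUnit.unit, punit_le_one⟩)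

variable {T : ℝ → Type}

abbrev DD (T : ℝ → Type) : Type := ℕ ⊕ₗ PUnit ⊕ₗ (Σₗ r : ℝ, T r) ⊕ₗ PUnit ⊕ₗ ℕᵒᵈ

variable [∀ r, LinearOrder (T r)]

def dnat (n : ℕ) : DD T := toLex (Sum.inl n)
def dj1 : DD T := toLex (Sum.inr (toLex (Sum.inl PUnit.unit)))
def dsig (σ : Σₗ r : ℝ, T r) : DD T := toLex (Sum.inr (toLex (Sum.inr (toLex (Sum.inl σ)))))
def dj2 : DD T :=
  toLex (Sum.inr (toLex (Sum.inr (toLex (Sum.inr (toLex (Sum.inl PUnit.unit)))))))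
def dnat' (n : ℕᵒᵈ) : DD T :=
  toLex (Sum.inr (toLex (Sum.inr (toLex (Sum.inr (toLex (Sum.inr n)))))))

lemma dnat_lt_dj1 (n : ℕ) : (dnat n : DD T) < dj1 := Sum.Lex.inl_lt_inr _ _
lemma dnat_lt_dsig (σ) : (dnat n : DD T) < dsig σ := Sum.Lex.inl_lt_inr _ _
lemma dnat_lt_dj2 (n : ℕ) : (dnat n : DD T) < dj2 := Sum.Lex.inl_lt_inr _ _
lemma dnat_lt_dnat' (n : ℕ) (n' : ℕᵒᵈ) : (dnat n : DD T) < dnat' n' := Sum.Lex.inl_lt_inr _ _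
lemma dj1_lt_dsig (σ) : (dj1 : DD T) < dsig σ :=
  Sum.Lex.inr_lt_inr_iff.2 (Sum.Lex.inl_lt_inr _ _)
lemma dj1_lt_dj2 : (dj1 : DD T) < dj2 :=
  Sum.Lex.inr_lt_inr_iff.2 (Sum.Lex.inl_lt_inr _ _)
lemma dj1_lt_dnat' (n' : ℕᵒᵈ) : (dj1 : DD T) < dnat' n' :=
  Sum.Lex.inr_lt_inr_iff.2 (Sum.Lex.inl_lt_inr _ _)
lemma dsig_lt_dj2 (σ) : (dsig σ : DD T) < dj2 :=
  Sum.Lex.inr_lt_inr_iff.2 (Sum.Lex.inr_lt_inr_iff.2 (Sum.Lex.inl_lt_inr _ _))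
lemma dsig_lt_dnat' (σ) (n' : ℕᵒᵈ) : (dsig σ : DD T) < dnat' n' :=
  Sum.Lex.inr_lt_inr_iff.2 (Sum.Lex.inr_lt_inr_iff.2 (Sum.Lex.inl_lt_inr _ _))
lemma dj2_lt_dnat' (n' : ℕᵒᵈ) : (dj2 : DD T) < dnat' n' :=
  Sum.Lex.inr_lt_inr_iff.2 (Sum.Lex.inr_lt_inr_iff.2 (Sum.Lex.inr_lt_inr_iff.2
    (Sum.Lex.inl_lt_inr _ _)))
lemma dnat_lt_dnat {n n' : ℕ} : (dnat n : DD T) < dnat n' ↔ n < n' := Sum.Lex.inl_lt_inl_iff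
lemma dsig_lt_dsig {σ σ'} : (dsig σ : DD T) < dsig σ' ↔ σ < σ' :=
  Sum.Lex.inr_lt_inr_iff.trans (Sum.Lex.inr_lt_inr_iff.trans Sum.Lex.inl_lt_inl_iff)
lemma dnat'_lt_dnat' {n n' : ℕᵒᵈ} : (dnat' n : DD T) < dnat' n' ↔ n < n' :=
  Sum.Lex.inr_lt_inr_iff.trans (Sum.Lex.inr_lt_inr_iff.trans
    (Sum.Lex.inr_lt_inr_iff.trans Sum.Lex.inr_lt_inr_iff))

lemma dd_cases (x : DD T) : (∃ n, x = dnat n) ∨ x = dj1 ∨ (∃ σ, x = dsig σ) ∨ x = dj2 ∨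
    (∃ n, x = dnat' n) := by
  rcases h1 : ofLex x with n | y
  · exact Or.inl ⟨n, eq_toLex_of_ofLex_eq h1⟩
  rcases h2 : ofLex y with u | y2
  · cases u
    refine Or.inr (Or.inl ?_)
    rw [eq_toLex_of_ofLex_eq h1, eq_toLex_of_ofLex_eq h2]; rfl
  rcases h3 : ofLex y2 with σ | y3
  · refine Or.inr (Or.inr (Or.inl ⟨σ, ?_⟩))
    rw [eq_toLex_of_ofLex_eq h1, eq_toLex_of_ofLex_eq h2, eq_toLex_of_ofLex_eq h3]; rfl
  rcases h4 : ofLex y3 with u | n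
  · cases u
    refine Or.inr (Or.inr (Or.inr (Or.inl ?_)))
    rw [eq_toLex_of_ofLex_eq h1, eq_toLex_of_ofLex_eq h2, eq_toLex_of_ofLex_eq h3,
      eq_toLex_of_ofLex_eq h4]; rfl
  · refine Or.inr (Or.inr (Or.inr (Or.inr ⟨n, ?_⟩)))
    rw [eq_toLex_of_ofLex_eq h1, eq_toLex_of_ofLex_eq h2, eq_toLex_of_ofLex_eq h3,
      eq_toLex_of_ofLex_eq h4]; rfl

end Concrete

section Emb
variable {T : ℝ → Type} [∀ r, LinearOrder (T r)]

def mq (φ : ∀ q : ℚ, T (q : ℝ) ≃o PP) (q : ℚ) (z : ℤ) : T (q : ℝ) := (φ q).symm (ppMid z)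
def tbot (φ : ∀ q : ℚ, T (q : ℝ) ≃o PP) (q : ℚ) : T (q : ℝ) := (φ q).symm ppBot
def ttop (φ : ∀ q : ℚ, T (q : ℝ) ≃o PP) (q : ℚ) : T (q : ℝ) := (φ q).symm ppTop

variable (φ : ∀ q : ℚ, T (q : ℝ) ≃o PP)

lemma tbot_le (q : ℚ) (t : T (q : ℝ)) : tbot φ q ≤ t := by
  have h := (φ q).symm.monotone (ppBot_le ((φ q) t))
  rwa [OrderIso.symm_apply_apply] at h

lemma le_ttop (q : ℚ) (t : T (q : ℝ)) : t ≤ ttop φ q := by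
  have h := (φ q).symm.monotone (pp_le_top ((φ q) t))
  rwa [OrderIso.symm_apply_apply] at h

lemma tbot_lt_mq (q : ℚ) (z : ℤ) : tbot φ q < mq φ q z := (φ q).symm.strictMono (ppBot_lt_mid z)
lemma mq_lt_ttop (q : ℚ) (z : ℤ) : mq φ q z < ttop φ q := (φ q).symm.strictMono (ppMid_lt_top z)
lemma tbot_lt_ttop (q : ℚ) : tbot φ q < ttop φ q := (φ q).symm.strictMono ppBot_lt_top
lemma mq_lt_mq {q : ℚ} {z z' : ℤ} : mq φ q z < mq φ q z' ↔ z < z' :=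
  ((φ q).symm.lt_iff_lt).trans ppMid_lt_mid

lemma t_cases (q : ℚ) (t : T (q : ℝ)) : t = tbot φ q ∨ (∃ z, t = mq φ q z) ∨ t = ttop φ q := by
  rcases pp_cases ((φ q) t) with h | ⟨z, h⟩ | h
  · left; rw [← (φ q).symm_apply_apply t, h]; rfl
  · right; left; exact ⟨z, by rw [← (φ q).symm_apply_apply t, h]; rfl⟩
  · right; right; rw [← (φ q).symm_apply_apply t, h]; rfl

abbrev AA : Type := ℕ ⊕ₗ (ℚ ×ₗ ℤ) ⊕ₗ ℕᵒᵈ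

def anat (n : ℕ) : AA := toLex (Sum.inl n)
def amid (p : ℚ ×ₗ ℤ) : AA := toLex (Sum.inr (toLex (Sum.inl p)))
def anat' (n : ℕᵒᵈ) : AA := toLex (Sum.inr (toLex (Sum.inr n)))

lemma aa_cases (x : AA) : (∃ n, x = anat n) ∨ (∃ p, x = amid p) ∨ ∃ n, x = anat' n := by
  rcases h1 : ofLex x with n | y
  · exact Or.inl ⟨n, eq_toLex_of_ofLex_eq h1⟩
  rcases h2 : ofLex y with p | n
  · refine Or.inr (Or.inl ⟨p, ?_⟩)
    rw [eq_toLex_of_ofLex_eq h1, eq_toLex_of_ofLex_eq h2]; rfl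
  · refine Or.inr (Or.inr ⟨n, ?_⟩)
    rw [eq_toLex_of_ofLex_eq h1, eq_toLex_of_ofLex_eq h2]; rfl

lemma anat_lt_amid (n : ℕ) (p) : anat n < amid p := Sum.Lex.inl_lt_inr _ _
lemma anat_lt_anat' (n : ℕ) (n' : ℕᵒᵈ) : anat n < anat' n' := Sum.Lex.inl_lt_inr _ _
lemma amid_lt_anat' (p) (n' : ℕᵒᵈ) : amid p < anat' n' :=
  Sum.Lex.inr_lt_inr_iff.2 (Sum.Lex.inl_lt_inr _ _)
lemma anat_lt_anat {n n' : ℕ} : anat n < anat n' ↔ n < n' := Sum.Lex.inl_lt_inl_iff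
lemma amid_lt_amid {p p'} : amid p < amid p' ↔ p < p' :=
  Sum.Lex.inr_lt_inr_iff.trans Sum.Lex.inl_lt_inl_iff
lemma anat'_lt_anat' {n n' : ℕᵒᵈ} : anat' n < anat' n' ↔ n < n' :=
  Sum.Lex.inr_lt_inr_iff.trans Sum.Lex.inr_lt_inr_iff

def embFun (x : AA) : DD T :=
  match ofLex x with
  | Sum.inl n => dnat n
  | Sum.inr y =>
    match ofLex y with
    | Sum.inl p => dsig (toLex ⟨((ofLex p).1 : ℝ), mq φ (ofLex p).1 (ofLex p).2⟩)
    | Sum.inr n => dnat' n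

lemma embFun_anat (n : ℕ) : embFun φ (anat n) = dnat n := rfl
lemma embFun_amid (q : ℚ) (z : ℤ) :
    embFun φ (amid (toLex (q, z))) = dsig (toLex ⟨(q : ℝ), mq φ q z⟩) := rfl
lemma embFun_anat' (n : ℕᵒᵈ) : embFun φ (anat' n) = dnat' n := rfl

lemma embFun_strictMono : StrictMono (embFun φ) := by
  intro x y h
  rcases aa_cases x with ⟨n, rfl⟩ | ⟨p, rfl⟩ | ⟨n, rfl⟩ <;>
    rcases aa_cases y with ⟨n', rfl⟩ | ⟨p', rfl⟩ | ⟨n', rfl⟩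
  · rw [embFun_anat, embFun_anat]
    exact dnat_lt_dnat.2 (anat_lt_anat.1 h)
  · have hp : toLex ((ofLex p').1, (ofLex p').2) = p' := rfl
    rw [embFun_anat, ← hp, embFun_amid]
    exact dnat_lt_dsig _
  · rw [embFun_anat, embFun_anat']
    exact dnat_lt_dnat' _ _
  · exact absurd (lt_trans h (anat_lt_amid n' p)) (lt_irrefl _)
  · have hp : toLex ((ofLex p).1, (ofLex p).2) = p := rfl
    have hp' : toLex ((ofLex p').1, (ofLex p').2) = p' := rfl
    rw [← hp, ← hp', embFun_amid, embFun_amid]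
    have hlt : p < p' := amid_lt_amid.1 h
    rw [← hp, ← hp'] at hlt
    rcases Prod.Lex.toLex_lt_toLex.1 hlt with h1 | ⟨h1, h2⟩
    · exact dsig_lt_dsig.2 (sigmaLex_lt_left _ _ (by exact_mod_cast h1))
    · simp only at h1 h2
      refine dsig_lt_dsig.2 ?_
      rw [h1]
      exact sigmaLex_lt_right _ _ (mq_lt_mq φ |>.2 h2)
  · have hp : toLex ((ofLex p).1, (ofLex p).2) = p := rfl
    rw [← hp, embFun_amid, embFun_anat']
    exact dsig_lt_dnat' _ _
  · exact absurd (lt_trans h (anat_lt_anat' n' n)) (lt_irrefl _)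
  · exact absurd (lt_trans h (amid_lt_anat' p' n)) (lt_irrefl _)
  · rw [embFun_anat', embFun_anat']
    exact dnat'_lt_dnat'.2 (anat'_lt_anat'.1 h)

end Emb

section Density
variable {T : ℝ → Type} [∀ r, LinearOrder (T r)]
lemma irrational_of_not_rat {r : ℝ} (h : ¬ ∃ q : ℚ, (q : ℝ) = r) : Irrational r := by
  rintro ⟨q, hq⟩
  exact h ⟨q, hq⟩

lemma t_irr_eq (ψ : ∀ r, Irrational r → T r ≃o PUnit) {r : ℝ} (h : Irrational r) (t t' : T r) : t = t' :=
  (ψ r h).injective (Subsingleton.elim _ _)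

lemma tT_complete (φ : ∀ q : ℚ, T (q : ℝ) ≃o PP) (ψ : ∀ r, Irrational r → T r ≃o PUnit) : ∀ r, IsCompleteLO (T r) := by
  intro r
  by_cases h : ∃ q : ℚ, (q : ℝ) = r
  · obtain ⟨q, rfl⟩ := h
    exact isCompleteLO_congr (φ q).symm pp_complete
  · exact isCompleteLO_congr (ψ r (irrational_of_not_rat h)).symm isCompleteLO_punit

lemma tT_bot (φ : ∀ q : ℚ, T (q : ℝ) ≃o PP) (ψ : ∀ r, Irrational r → T r ≃o PUnit) : ∀ r, ∃ b : T r, ∀ t, b ≤ t := by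
  intro r
  by_cases h : ∃ q : ℚ, (q : ℝ) = r
  · obtain ⟨q, rfl⟩ := h
    exact ⟨tbot φ q, tbot_le φ q⟩
  · have hirr := irrational_of_not_rat h
    exact ⟨(ψ r hirr).symm PUnit.unit, fun t => (t_irr_eq ψ hirr _ t).le⟩

lemma tT_top (φ : ∀ q : ℚ, T (q : ℝ) ≃o PP) (ψ : ∀ r, Irrational r → T r ≃o PUnit) : ∀ r, ∃ m : T r, ∀ t, t ≤ m := by
  intro r
  by_cases h : ∃ q : ℚ, (q : ℝ) = r
  · obtain ⟨q, rfl⟩ := h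
    exact ⟨ttop φ q, le_ttop φ q⟩
  · have hirr := irrational_of_not_rat h
    exact ⟨(ψ r hirr).symm PUnit.unit, fun t => (t_irr_eq ψ hirr t _).le⟩

lemma dd_complete (φ : ∀ q : ℚ, T (q : ℝ) ≃o PP) (ψ : ∀ r, Irrational r → T r ≃o PUnit) : IsCompleteLO (DD T) := by
  refine sumLex_complete (isCompleteLO_of_cclo ℕ) ?_ (Or.inr ⟨toLex (Sum.inl PUnit.unit), ?_⟩)
  · refine sumLex_complete isCompleteLO_punit ?_ (Or.inl ⟨PUnit.unit, punit_le_one⟩)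
    refine sumLex_complete (sigmaLex_complete (tT_complete φ ψ) (tT_bot φ ψ) (tT_top φ ψ)) ?_
      (Or.inr ⟨toLex (Sum.inl PUnit.unit), ?_⟩)
    · exact sumLex_complete isCompleteLO_punit (isCompleteLO_of_cclo ℕᵒᵈ)
        (Or.inl ⟨PUnit.unit, punit_le_one⟩)
    · exact fun b => sumLex_bot_le punit_one_le b
  · exact fun b => sumLex_bot_le punit_one_le b

end Density

section BigDensity
variable {T : ℝ → Type} [∀ r, LinearOrder (T r)]

def DensePred (φ : ∀ q : ℚ, T (q : ℝ) ≃o PP) (d : DD T) : Prop :=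
  (∃ a, embFun φ a = d) ∨
    ((∃ a, embFun φ a < d) ∧ (∃ a, d < embFun φ a) ∧
     (∀ b, b < d → ∃ a, b < embFun φ a ∧ embFun φ a < d) ∧
     (∀ b, d < b → ∃ a, d < embFun φ a ∧ embFun φ a < b))

lemma dense_at_sig (φ : ∀ q : ℚ, T (q : ℝ) ≃o PP) (ψ : ∀ r, Irrational r → T r ≃o PUnit)
    (r : ℝ) (t : T r) : DensePred φ (dsig (toLex ⟨r, t⟩)) := by
  by_cases hr : ∃ q : ℚ, (q : ℝ) = r
  · obtain ⟨q, rfl⟩ := hr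
    rcases t_cases φ q t with rfl | ⟨z, rfl⟩ | rfl
    · -- t = bot
      right
      refine ⟨⟨anat 0, dnat_lt_dsig _⟩, ⟨amid (toLex (q, 0)), ?_⟩, ?_, ?_⟩
      · rw [embFun_amid]
        exact dsig_lt_dsig.2 (sigmaLex_lt_right _ _ (tbot_lt_mq φ q 0))
      · intro b hb
        rcases dd_cases b with ⟨n, rfl⟩ | rfl | ⟨σ', rfl⟩ | rfl | ⟨n, rfl⟩
        · refine ⟨amid (toLex (q - 1, 0)), ?_, ?_⟩
          · rw [embFun_amid]; exact dnat_lt_dsig _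
          · rw [embFun_amid]
            exact dsig_lt_dsig.2 (sigmaLex_lt_left _ _ (by exact_mod_cast sub_one_lt q))
        · refine ⟨amid (toLex (q - 1, 0)), ?_, ?_⟩
          · rw [embFun_amid]; exact dj1_lt_dsig _
          · rw [embFun_amid]
            exact dsig_lt_dsig.2 (sigmaLex_lt_left _ _ (by exact_mod_cast sub_one_lt q))
        · obtain ⟨⟨r', t'⟩, rfl⟩ : ∃ p : Σ r : ℝ, T r, σ' = toLex p := ⟨ofLex σ', rfl⟩
          rcases sigmaLex_lt_elim (dsig_lt_dsig.1 hb) with h | ⟨heq, hlt⟩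
          · obtain ⟨q'', hq1, hq2⟩ := exists_rat_btwn h
            refine ⟨amid (toLex (q'', 0)), ?_, ?_⟩
            · rw [embFun_amid]; exact dsig_lt_dsig.2 (sigmaLex_lt_left _ _ hq1)
            · rw [embFun_amid]; exact dsig_lt_dsig.2 (sigmaLex_lt_left _ _ hq2)
          · subst heq
            exact absurd hlt (not_lt.2 (tbot_le φ q _))
        · exact absurd (lt_trans hb (dsig_lt_dj2 _)) (lt_irrefl _)
        · exact absurd (lt_trans hb (dsig_lt_dnat' _ n)) (lt_irrefl _)
      · intro b hb
        rcases dd_cases b with ⟨n, rfl⟩ | rfl | ⟨σ', rfl⟩ | rfl | ⟨n, rfl⟩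
        · exact absurd (lt_trans hb (dnat_lt_dsig _)) (lt_irrefl _)
        · exact absurd (lt_trans hb (dj1_lt_dsig _)) (lt_irrefl _)
        · obtain ⟨⟨r', t'⟩, rfl⟩ : ∃ p : Σ r : ℝ, T r, σ' = toLex p := ⟨ofLex σ', rfl⟩
          rcases sigmaLex_lt_elim (dsig_lt_dsig.1 hb) with h | ⟨heq, hlt⟩
          · refine ⟨amid (toLex (q, 0)), ?_, ?_⟩
            · rw [embFun_amid]
              exact dsig_lt_dsig.2 (sigmaLex_lt_right _ _ (tbot_lt_mq φ q 0))
            · rw [embFun_amid]; exact dsig_lt_dsig.2 (sigmaLex_lt_left _ _ h)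
          · subst heq
            rcases t_cases φ q t' with rfl | ⟨z, rfl⟩ | rfl
            · exact absurd hlt (lt_irrefl _)
            · refine ⟨amid (toLex (q, z - 1)), ?_, ?_⟩
              · rw [embFun_amid]
                exact dsig_lt_dsig.2 (sigmaLex_lt_right _ _ (tbot_lt_mq φ q (z - 1)))
              · rw [embFun_amid]
                exact dsig_lt_dsig.2 (sigmaLex_lt_right _ _ ((mq_lt_mq φ).2 (sub_one_lt z)))
            · refine ⟨amid (toLex (q, 0)), ?_, ?_⟩
              · rw [embFun_amid]
                exact dsig_lt_dsig.2 (sigmaLex_lt_right _ _ (tbot_lt_mq φ q 0))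
              · rw [embFun_amid]
                exact dsig_lt_dsig.2 (sigmaLex_lt_right _ _ (mq_lt_ttop φ q 0))
        · refine ⟨amid (toLex (q, 0)), ?_, ?_⟩
          · rw [embFun_amid]
            exact dsig_lt_dsig.2 (sigmaLex_lt_right _ _ (tbot_lt_mq φ q 0))
          · rw [embFun_amid]; exact dsig_lt_dj2 _
        · refine ⟨amid (toLex (q, 0)), ?_, ?_⟩
          · rw [embFun_amid]
            exact dsig_lt_dsig.2 (sigmaLex_lt_right _ _ (tbot_lt_mq φ q 0))
          · rw [embFun_amid]; exact dsig_lt_dnat' _ n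
    · -- t = mq z : in range
      left
      exact ⟨amid (toLex (q, z)), rfl⟩
    · -- t = top
      right
      refine ⟨⟨amid (toLex (q, 0)), ?_⟩, ⟨anat' (OrderDual.toDual 0), ?_⟩, ?_, ?_⟩
      · rw [embFun_amid]
        exact dsig_lt_dsig.2 (sigmaLex_lt_right _ _ (mq_lt_ttop φ q 0))
      · rw [embFun_anat']
        exact dsig_lt_dnat' _ _
      · intro b hb
        rcases dd_cases b with ⟨n, rfl⟩ | rfl | ⟨σ', rfl⟩ | rfl | ⟨n, rfl⟩
        · refine ⟨amid (toLex (q, 0)), ?_, ?_⟩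
          · rw [embFun_amid]; exact dnat_lt_dsig _
          · rw [embFun_amid]
            exact dsig_lt_dsig.2 (sigmaLex_lt_right _ _ (mq_lt_ttop φ q 0))
        · refine ⟨amid (toLex (q, 0)), ?_, ?_⟩
          · rw [embFun_amid]; exact dj1_lt_dsig _
          · rw [embFun_amid]
            exact dsig_lt_dsig.2 (sigmaLex_lt_right _ _ (mq_lt_ttop φ q 0))
        · obtain ⟨⟨r', t'⟩, rfl⟩ : ∃ p : Σ r : ℝ, T r, σ' = toLex p := ⟨ofLex σ', rfl⟩
          rcases sigmaLex_lt_elim (dsig_lt_dsig.1 hb) with h | ⟨heq, hlt⟩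
          · obtain ⟨q'', hq1, hq2⟩ := exists_rat_btwn h
            refine ⟨amid (toLex (q'', 0)), ?_, ?_⟩
            · rw [embFun_amid]; exact dsig_lt_dsig.2 (sigmaLex_lt_left _ _ hq1)
            · rw [embFun_amid]; exact dsig_lt_dsig.2 (sigmaLex_lt_left _ _ hq2)
          · subst heq
            rcases t_cases φ q t' with rfl | ⟨z, rfl⟩ | rfl
            · refine ⟨amid (toLex (q, 0)), ?_, ?_⟩
              · rw [embFun_amid]
                exact dsig_lt_dsig.2 (sigmaLex_lt_right _ _ (tbot_lt_mq φ q 0))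
              · rw [embFun_amid]
                exact dsig_lt_dsig.2 (sigmaLex_lt_right _ _ (mq_lt_ttop φ q 0))
            · refine ⟨amid (toLex (q, z + 1)), ?_, ?_⟩
              · rw [embFun_amid]
                exact dsig_lt_dsig.2 (sigmaLex_lt_right _ _ ((mq_lt_mq φ).2 (lt_add_one z)))
              · rw [embFun_amid]
                exact dsig_lt_dsig.2 (sigmaLex_lt_right _ _ (mq_lt_ttop φ q (z + 1)))
            · exact absurd hlt (lt_irrefl _)
        · exact absurd (lt_trans hb (dsig_lt_dj2 _)) (lt_irrefl _)
        · exact absurd (lt_trans hb (dsig_lt_dnat' _ n)) (lt_irrefl _)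
      · intro b hb
        rcases dd_cases b with ⟨n, rfl⟩ | rfl | ⟨σ', rfl⟩ | rfl | ⟨n, rfl⟩
        · exact absurd (lt_trans hb (dnat_lt_dsig _)) (lt_irrefl _)
        · exact absurd (lt_trans hb (dj1_lt_dsig _)) (lt_irrefl _)
        · obtain ⟨⟨r', t'⟩, rfl⟩ : ∃ p : Σ r : ℝ, T r, σ' = toLex p := ⟨ofLex σ', rfl⟩
          rcases sigmaLex_lt_elim (dsig_lt_dsig.1 hb) with h | ⟨heq, hlt⟩
          · obtain ⟨q'', hq1, hq2⟩ := exists_rat_btwn h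
            refine ⟨amid (toLex (q'', 0)), ?_, ?_⟩
            · rw [embFun_amid]; exact dsig_lt_dsig.2 (sigmaLex_lt_left _ _ hq1)
            · rw [embFun_amid]; exact dsig_lt_dsig.2 (sigmaLex_lt_left _ _ hq2)
          · subst heq
            exact absurd hlt (not_lt.2 (le_ttop φ q _))
        · refine ⟨amid (toLex (q + 1, 0)), ?_, ?_⟩
          · rw [embFun_amid]
            exact dsig_lt_dsig.2 (sigmaLex_lt_left _ _ (by exact_mod_cast lt_add_one q))
          · rw [embFun_amid]; exact dsig_lt_dj2 _
        · refine ⟨amid (toLex (q + 1, 0)), ?_, ?_⟩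
          · rw [embFun_amid]
            exact dsig_lt_dsig.2 (sigmaLex_lt_left _ _ (by exact_mod_cast lt_add_one q))
          · rw [embFun_amid]; exact dsig_lt_dnat' _ n
  · -- irrational
    have hirr := irrational_of_not_rat hr
    right
    refine ⟨⟨anat 0, dnat_lt_dsig _⟩, ⟨anat' (OrderDual.toDual 0), dsig_lt_dnat' _ _⟩, ?_, ?_⟩
    · intro b hb
      rcases dd_cases b with ⟨n, rfl⟩ | rfl | ⟨σ', rfl⟩ | rfl | ⟨n, rfl⟩
      · obtain ⟨q0, hq0⟩ := exists_rat_lt r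
        refine ⟨amid (toLex (q0, 0)), ?_, ?_⟩
        · rw [embFun_amid]; exact dnat_lt_dsig _
        · rw [embFun_amid]; exact dsig_lt_dsig.2 (sigmaLex_lt_left _ _ hq0)
      · obtain ⟨q0, hq0⟩ := exists_rat_lt r
        refine ⟨amid (toLex (q0, 0)), ?_, ?_⟩
        · rw [embFun_amid]; exact dj1_lt_dsig _
        · rw [embFun_amid]; exact dsig_lt_dsig.2 (sigmaLex_lt_left _ _ hq0)
      · obtain ⟨⟨r', t'⟩, rfl⟩ : ∃ p : Σ r : ℝ, T r, σ' = toLex p := ⟨ofLex σ', rfl⟩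
        rcases sigmaLex_lt_elim (dsig_lt_dsig.1 hb) with h | ⟨heq, hlt⟩
        · obtain ⟨q'', hq1, hq2⟩ := exists_rat_btwn h
          refine ⟨amid (toLex (q'', 0)), ?_, ?_⟩
          · rw [embFun_amid]; exact dsig_lt_dsig.2 (sigmaLex_lt_left _ _ hq1)
          · rw [embFun_amid]; exact dsig_lt_dsig.2 (sigmaLex_lt_left _ _ hq2)
        · subst heq
          exact absurd (t_irr_eq ψ hirr t' t) (ne_of_lt hlt)
      · exact absurd (lt_trans hb (dsig_lt_dj2 _)) (lt_irrefl _)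
      · exact absurd (lt_trans hb (dsig_lt_dnat' _ n)) (lt_irrefl _)
    · intro b hb
      rcases dd_cases b with ⟨n, rfl⟩ | rfl | ⟨σ', rfl⟩ | rfl | ⟨n, rfl⟩
      · exact absurd (lt_trans hb (dnat_lt_dsig _)) (lt_irrefl _)
      · exact absurd (lt_trans hb (dj1_lt_dsig _)) (lt_irrefl _)
      · obtain ⟨⟨r', t'⟩, rfl⟩ : ∃ p : Σ r : ℝ, T r, σ' = toLex p := ⟨ofLex σ', rfl⟩
        rcases sigmaLex_lt_elim (dsig_lt_dsig.1 hb) with h | ⟨heq, hlt⟩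
        · obtain ⟨q'', hq1, hq2⟩ := exists_rat_btwn h
          refine ⟨amid (toLex (q'', 0)), ?_, ?_⟩
          · rw [embFun_amid]; exact dsig_lt_dsig.2 (sigmaLex_lt_left _ _ hq1)
          · rw [embFun_amid]; exact dsig_lt_dsig.2 (sigmaLex_lt_left _ _ hq2)
        · exfalso
          subst heq
          exact absurd (t_irr_eq ψ hirr t t') (ne_of_lt hlt)
      · obtain ⟨q0, hq0⟩ := exists_rat_gt r
        refine ⟨amid (toLex (q0, 0)), ?_, ?_⟩
        · rw [embFun_amid]; exact dsig_lt_dsig.2 (sigmaLex_lt_left _ _ hq0)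
        · rw [embFun_amid]; exact dsig_lt_dj2 _
      · obtain ⟨q0, hq0⟩ := exists_rat_gt r
        refine ⟨amid (toLex (q0, 0)), ?_, ?_⟩
        · rw [embFun_amid]; exact dsig_lt_dsig.2 (sigmaLex_lt_left _ _ hq0)
        · rw [embFun_amid]; exact dsig_lt_dnat' _ n

end BigDensity

section FinalDensity
variable {T : ℝ → Type} [∀ r, LinearOrder (T r)]

lemma embFun_dense (φ : ∀ q : ℚ, T (q : ℝ) ≃o PP) (ψ : ∀ r, Irrational r → T r ≃o PUnit) :
    ∀ d : DD T, DensePred φ d := by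
  intro d
  rcases dd_cases d with ⟨n, rfl⟩ | rfl | ⟨σ, rfl⟩ | rfl | ⟨n, rfl⟩
  · exact Or.inl ⟨anat n, rfl⟩
  · right
    refine ⟨⟨anat 0, dnat_lt_dj1 0⟩, ⟨amid (toLex (0, 0)), ?_⟩, ?_, ?_⟩
    · rw [embFun_amid]; exact dj1_lt_dsig _
    · intro b hb
      rcases dd_cases b with ⟨n, rfl⟩ | rfl | ⟨σ', rfl⟩ | rfl | ⟨n, rfl⟩
      · refine ⟨anat (n + 1), ?_, ?_⟩
        · rw [embFun_anat]; exact dnat_lt_dnat.2 (lt_add_one n)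
        · rw [embFun_anat]; exact dnat_lt_dj1 _
      · exact absurd hb (lt_irrefl _)
      · exact absurd (lt_trans hb (dj1_lt_dsig _)) (lt_irrefl _)
      · exact absurd (lt_trans hb dj1_lt_dj2) (lt_irrefl _)
      · exact absurd (lt_trans hb (dj1_lt_dnat' n)) (lt_irrefl _)
    · intro b hb
      rcases dd_cases b with ⟨n, rfl⟩ | rfl | ⟨σ', rfl⟩ | rfl | ⟨n, rfl⟩
      · exact absurd (lt_trans hb (dnat_lt_dj1 n)) (lt_irrefl _)
      · exact absurd hb (lt_irrefl _)
      · obtain ⟨⟨r', t'⟩, rfl⟩ : ∃ p : Σ r : ℝ, T r, σ' = toLex p := ⟨ofLex σ', rfl⟩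
        obtain ⟨q0, hq0⟩ := exists_rat_lt r'
        refine ⟨amid (toLex (q0, 0)), ?_, ?_⟩
        · rw [embFun_amid]; exact dj1_lt_dsig _
        · rw [embFun_amid]; exact dsig_lt_dsig.2 (sigmaLex_lt_left _ _ hq0)
      · refine ⟨amid (toLex (0, 0)), ?_, ?_⟩
        · rw [embFun_amid]; exact dj1_lt_dsig _
        · rw [embFun_amid]; exact dsig_lt_dj2 _
      · refine ⟨amid (toLex (0, 0)), ?_, ?_⟩
        · rw [embFun_amid]; exact dj1_lt_dsig _
        · rw [embFun_amid]; exact dsig_lt_dnat' _ n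
  · exact dense_at_sig φ ψ (ofLex σ).1 (ofLex σ).2
  · right
    refine ⟨⟨amid (toLex (0, 0)), ?_⟩, ⟨anat' (OrderDual.toDual 0), ?_⟩, ?_, ?_⟩
    · rw [embFun_amid]; exact dsig_lt_dj2 _
    · rw [embFun_anat']; exact dj2_lt_dnat' _
    · intro b hb
      rcases dd_cases b with ⟨n, rfl⟩ | rfl | ⟨σ', rfl⟩ | rfl | ⟨n, rfl⟩
      · refine ⟨amid (toLex (0, 0)), ?_, ?_⟩
        · rw [embFun_amid]; exact dnat_lt_dsig _
        · rw [embFun_amid]; exact dsig_lt_dj2 _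
      · refine ⟨amid (toLex (0, 0)), ?_, ?_⟩
        · rw [embFun_amid]; exact dj1_lt_dsig _
        · rw [embFun_amid]; exact dsig_lt_dj2 _
      · obtain ⟨⟨r', t'⟩, rfl⟩ : ∃ p : Σ r : ℝ, T r, σ' = toLex p := ⟨ofLex σ', rfl⟩
        obtain ⟨q0, hq0⟩ := exists_rat_gt r'
        refine ⟨amid (toLex (q0, 0)), ?_, ?_⟩
        · rw [embFun_amid]; exact dsig_lt_dsig.2 (sigmaLex_lt_left _ _ hq0)
        · rw [embFun_amid]; exact dsig_lt_dj2 _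
      · exact absurd hb (lt_irrefl _)
      · exact absurd (lt_trans hb (dj2_lt_dnat' n)) (lt_irrefl _)
    · intro b hb
      rcases dd_cases b with ⟨n, rfl⟩ | rfl | ⟨σ', rfl⟩ | rfl | ⟨n, rfl⟩
      · exact absurd (lt_trans hb (dnat_lt_dj2 n)) (lt_irrefl _)
      · exact absurd (lt_trans hb dj1_lt_dj2) (lt_irrefl _)
      · exact absurd (lt_trans hb (dsig_lt_dj2 σ')) (lt_irrefl _)
      · exact absurd hb (lt_irrefl _)
      · refine ⟨anat' (OrderDual.toDual (OrderDual.ofDual n + 1)), ?_, ?_⟩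
        · rw [embFun_anat']; exact dj2_lt_dnat' _
        · rw [embFun_anat']
          exact dnat'_lt_dnat'.2 (OrderDual.toDual_lt_toDual.2 (lt_add_one _))
  · exact Or.inl ⟨anat' n, rfl⟩

end FinalDensity

def ordIsoPUnit : PUnit.{u + 1} ≃o PUnit.{v + 1} where
  toFun _ := PUnit.unit
  invFun _ := PUnit.unit
  left_inv x := by cases x; rfl
  right_inv x := by cases x; rfl
  map_rel_iff' := by intro a b; exact iff_of_true (punit_le _ _) (punit_le _ _)

def sumLexCongrO {A A' B B' : Type*} [LinearOrder A] [LinearOrder A'] [LinearOrder B]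
    [LinearOrder B'] (f : A ≃o A') (g : B ≃o B') : (A ⊕ₗ B) ≃o (A' ⊕ₗ B') where
  toFun x := toLex ((ofLex x).map f g)
  invFun x := toLex ((ofLex x).map f.symm g.symm)
  left_inv x := by
    rcases h : ofLex x with a | b <;> rw [eq_toLex_of_ofLex_eq h] <;> simp
  right_inv x := by
    rcases h : ofLex x with a | b <;> rw [eq_toLex_of_ofLex_eq h] <;> simp
  map_rel_iff' := by
    intro x y
    rcases hx : ofLex x with a | b <;> rcases hy : ofLex y with a' | b' <;>
        rw [eq_toLex_of_ofLex_eq hx, eq_toLex_of_ofLex_eq hy]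
    · exact Sum.Lex.inl_le_inl_iff.trans (f.le_iff_le.trans Sum.Lex.inl_le_inl_iff.symm)
    · exact iff_of_true (Sum.Lex.inl_le_inr _ _) (Sum.Lex.inl_le_inr _ _)
    · exact iff_of_false Sum.Lex.not_inr_le_inl Sum.Lex.not_inr_le_inl
    · exact Sum.Lex.inr_le_inr_iff.trans (g.le_iff_le.trans Sum.Lex.inr_le_inr_iff.symm)


/-- the completion of `𝒪 := ω + ζ·η + ω*` is
`ω + 𝟏 + (Σ_{r ∈ ℝ} T_r) + 𝟏 + ω*`, where `T_r = 𝟏 + ζ + 𝟏` for rational `r` and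
`T_r = 𝟏` for irrational `r`. -/
theorem completion_of_omega_zeta_eta_omegaStar (C : Type) [LinearOrder C]
    (e : (ℕ ⊕ₗ (ℚ ×ₗ ℤ) ⊕ₗ ℕᵒᵈ) ↪o C) (hC : IsCompletion e)
    (T : ℝ → Type) [∀ r, LinearOrder (T r)]
    (hTq : ∀ q : ℚ, Nonempty (T q ≃o (PUnit ⊕ₗ ℤ ⊕ₗ PUnit)))
    (hTirr : ∀ r : ℝ, Irrational r → Nonempty (T r ≃o PUnit)) :
    Nonempty (C ≃o (ℕ ⊕ₗ PUnit ⊕ₗ (Σₗ r : ℝ, T r) ⊕ₗ PUnit ⊕ₗ ℕᵒᵈ)) := by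
  let φ : ∀ q : ℚ, T (q : ℝ) ≃o PP := fun q =>
    (hTq q).some.trans (sumLexCongrO ordIsoPUnit (sumLexCongrO (OrderIso.refl ℤ) ordIsoPUnit))
  let ψ : ∀ r, Irrational r → T r ≃o PUnit.{1} := fun r h => (hTirr r h).some.trans ordIsoPUnit
  let e' : AA ↪o DD T := OrderEmbedding.ofStrictMono (embFun φ) (embFun_strictMono φ)
  have hD : IsCompletion e' := isCompletion_of e' (dd_complete φ ψ) (embFun_dense φ ψ)
  obtain ⟨F⟩ := completion_unique hC hD
  exact ⟨F.trans (sumLexCongrO (OrderIso.refl ℕ) (sumLexCongrO ordIsoPUnit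
    (sumLexCongrO (OrderIso.refl _) (sumLexCongrO ordIsoPUnit (OrderIso.refl ℕᵒᵈ)))))⟩
end

section
/- If L is a nonempty linear order in dLO_fp⁰¹ (discrete, finitely presented, with no minimum element and with a maximum element), then there exist L₁ ∈ dLO_fp¹¹ and L₂ ∈ dLO_fp¹¹ ∪ {𝟎} such that L ≅ L₁·ω* + L₂. -/
/-- Bundled linear orders (in `Type 0`). -/
structure BLinOrd : Type 1 where
  carrier : Type
  [str : LinearOrder carrier]

attribute [instance] BLinOrd.str

/-- The bundled linear order on a given type. -/
def BLinOrd.of (α : Type) [LinearOrder α] : BLinOrd := ⟨α⟩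

/-- The class of finitely presented linear orders: the smallest class of linear orders
containing `𝟎` and `𝟏` that is closed under order isomorphism, binary order sums,
and the anti-lexicographic products `L·ω` and `L·ω*`. -/
inductive LOfp : BLinOrd → Prop
  | empty : LOfp (BLinOrd.of (Fin 0))
  | one : LOfp (BLinOrd.of (Fin 1))
  | iso {X Y : BLinOrd} : LOfp X → Nonempty (X.carrier ≃o Y.carrier) → LOfp Y
  | add {X Y : BLinOrd} : LOfp X → LOfp Y → LOfp (BLinOrd.of (X.carrier ⊕ₗ Y.carrier))
  | mulOmega {X : BLinOrd} : LOfp X → LOfp (BLinOrd.of (ℕ ×ₗ X.carrier))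
  | mulOmegaStar {X : BLinOrd} : LOfp X → LOfp (BLinOrd.of (ℕᵒᵈ ×ₗ X.carrier))

/-- A linear order is discrete if every non-maximal element has an immediate successor
and every non-minimal element has an immediate predecessor. -/
def IsDiscreteLO (α : Type*) [LinearOrder α] : Prop :=
  (∀ a : α, (∃ b, a < b) → ∃ b, a ⋖ b) ∧ (∀ a : α, (∃ b, b < a) → ∃ b, b ⋖ a)

/-- Bounded discrete finitely presented linear orders: discrete members of `LOfp` with a
minimum element and a maximum element. -/
def dLOfp11 (X : BLinOrd) : Prop :=
  LOfp X ∧ IsDiscreteLO X.carrier ∧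
    (∃ a : X.carrier, ∀ x, a ≤ x) ∧ (∃ a : X.carrier, ∀ x, x ≤ a)

open Sum

section Helpers
variable {α β : Type*} [LinearOrder α] [LinearOrder β]

lemma discrete_of_iso (e : α ≃o β) (h : IsDiscreteLO α) : IsDiscreteLO β := by
  constructor
  · rintro b ⟨c, hc⟩
    obtain ⟨d, hd⟩ := h.1 (e.symm b) ⟨e.symm c, e.symm.strictMono hc⟩
    exact ⟨e d, by simpa using (apply_covBy_apply_iff (e : α ≃o β)).2 hd⟩
  · rintro b ⟨c, hc⟩
    obtain ⟨d, hd⟩ := h.2 (e.symm b) ⟨e.symm c, e.symm.strictMono hc⟩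
    exact ⟨e d, by simpa using (apply_covBy_apply_iff (e : α ≃o β)).2 hd⟩

lemma inlCovBy {a a' : α} (h : a ⋖ a') : (toLex (inl a) : α ⊕ₗ β) ⋖ toLex (inl a') := by
  refine ⟨Sum.Lex.inl_lt_inl_iff.2 h.1, ?_⟩
  rintro (c | c) h1 h2
  · exact h.2 (Sum.Lex.inl_lt_inl_iff.1 h1) (Sum.Lex.inl_lt_inl_iff.1 h2)
  · exact Sum.Lex.not_inr_lt_inl h2

lemma inrCovBy {b b' : β} (h : b ⋖ b') : (toLex (inr b) : α ⊕ₗ β) ⋖ toLex (inr b') := by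
  refine ⟨Sum.Lex.inr_lt_inr_iff.2 h.1, ?_⟩
  rintro (c | c) h1 h2
  · exact Sum.Lex.not_inr_lt_inl h1
  · exact h.2 (Sum.Lex.inr_lt_inr_iff.1 h1) (Sum.Lex.inr_lt_inr_iff.1 h2)

lemma inlCovByInr {a : α} {b : β} (ha : ∀ x, x ≤ a) (hb : ∀ y, b ≤ y) :
    (toLex (inl a) : α ⊕ₗ β) ⋖ toLex (inr b) := by
  refine ⟨Sum.Lex.inl_lt_inr _ _, ?_⟩
  rintro (c | c) h1 h2
  · exact absurd (Sum.Lex.inl_lt_inl_iff.1 h1) (ha c).not_gt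
  · exact absurd (Sum.Lex.inr_lt_inr_iff.1 h2) (hb c).not_gt

lemma IsDiscreteLO.sum (hA : IsDiscreteLO α) (hB : IsDiscreteLO β)
    (h1 : ∀ a : α, (∀ x, x ≤ a) → Nonempty β → ∃ b : β, ∀ y, b ≤ y)
    (h2 : ∀ b : β, (∀ y, b ≤ y) → Nonempty α → ∃ a : α, ∀ x, x ≤ a) :
    IsDiscreteLO (α ⊕ₗ β) := by
  constructor
  · rintro (a | b) ⟨c, hc⟩
    · by_cases hm : ∃ a', a < a'
      · obtain ⟨a', ha'⟩ := hA.1 a hm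
        exact ⟨_, inlCovBy ha'⟩
      · push_neg at hm
        have hmax : ∀ x, x ≤ a := fun x => hm x
        rcases c with c | c
        · exact absurd (Sum.Lex.inl_lt_inl_iff.1 hc) (hmax c).not_gt
        · obtain ⟨b0, hb0⟩ := h1 a hmax ⟨c⟩
          exact ⟨_, inlCovByInr hmax hb0⟩
    · rcases c with c | c
      · exact absurd hc Sum.Lex.not_inr_lt_inl
      · obtain ⟨b', hb'⟩ := hB.1 b ⟨c, Sum.Lex.inr_lt_inr_iff.1 hc⟩
        exact ⟨_, inrCovBy hb'⟩
  · rintro (a | b) ⟨c, hc⟩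
    · rcases c with c | c
      · obtain ⟨a', ha'⟩ := hA.2 a ⟨c, Sum.Lex.inl_lt_inl_iff.1 hc⟩
        exact ⟨_, inlCovBy ha'⟩
      · exact absurd hc Sum.Lex.not_inr_lt_inl
    · by_cases hm : ∃ b', b' < b
      · obtain ⟨b', hb'⟩ := hB.2 b hm
        exact ⟨_, inrCovBy hb'⟩
      · push_neg at hm
        have hmin : ∀ y, b ≤ y := fun y => hm y
        rcases c with c | c
        · obtain ⟨a0, ha0⟩ := h2 b hmin ⟨c⟩
          exact ⟨_, inlCovByInr ha0 hmin⟩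
        · exact absurd (Sum.Lex.inr_lt_inr_iff.1 hc) (hmin c).not_gt

lemma discrete_sum_left (h : IsDiscreteLO (α ⊕ₗ β)) : IsDiscreteLO α := by
  constructor
  · rintro a ⟨c, hc⟩
    obtain ⟨d, hd⟩ := h.1 (toLex (inl a)) ⟨toLex (inl c), Sum.Lex.inl_lt_inl_iff.2 hc⟩
    rcases d with d | d
    · refine ⟨d, Sum.Lex.inl_lt_inl_iff.1 hd.1, fun e h1 h2 => ?_⟩
      exact hd.2 (Sum.Lex.inl_lt_inl_iff.2 h1) (Sum.Lex.inl_lt_inl_iff.2 h2)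
    · exact absurd (Sum.Lex.inl_lt_inr c d) (hd.2 (Sum.Lex.inl_lt_inl_iff.2 hc))
  · rintro a ⟨c, hc⟩
    obtain ⟨d, hd⟩ := h.2 (toLex (inl a)) ⟨toLex (inl c), Sum.Lex.inl_lt_inl_iff.2 hc⟩
    rcases d with d | d
    · refine ⟨d, Sum.Lex.inl_lt_inl_iff.1 hd.1, fun e h1 h2 => ?_⟩
      exact hd.2 (Sum.Lex.inl_lt_inl_iff.2 h1) (Sum.Lex.inl_lt_inl_iff.2 h2)
    · exact absurd hd.1 Sum.Lex.not_inr_lt_inl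

lemma discrete_sum_right (h : IsDiscreteLO (α ⊕ₗ β)) : IsDiscreteLO β := by
  constructor
  · rintro b ⟨c, hc⟩
    obtain ⟨d, hd⟩ := h.1 (toLex (inr b)) ⟨toLex (inr c), Sum.Lex.inr_lt_inr_iff.2 hc⟩
    rcases d with d | d
    · exact absurd hd.1 Sum.Lex.not_inr_lt_inl
    · refine ⟨d, Sum.Lex.inr_lt_inr_iff.1 hd.1, fun e h1 h2 => ?_⟩
      exact hd.2 (Sum.Lex.inr_lt_inr_iff.2 h1) (Sum.Lex.inr_lt_inr_iff.2 h2)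
  · rintro b ⟨c, hc⟩
    obtain ⟨d, hd⟩ := h.2 (toLex (inr b)) ⟨toLex (inr c), Sum.Lex.inr_lt_inr_iff.2 hc⟩
    rcases d with d | d
    · exact absurd (Sum.Lex.inr_lt_inr_iff.2 hc) (hd.2 (Sum.Lex.inl_lt_inr d c))
    · refine ⟨d, Sum.Lex.inr_lt_inr_iff.1 hd.1, fun e h1 h2 => ?_⟩
      exact hd.2 (Sum.Lex.inr_lt_inr_iff.2 h1) (Sum.Lex.inr_lt_inr_iff.2 h2)

lemma junction_min (h : IsDiscreteLO (α ⊕ₗ β)) {a : α} (ha : ∀ x, x ≤ a) (b0 : β) :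
    ∃ b : β, ∀ y, b ≤ y := by
  obtain ⟨d, hd⟩ := h.1 (toLex (inl a)) ⟨toLex (inr b0), Sum.Lex.inl_lt_inr _ _⟩
  rcases d with d | d
  · exact absurd (Sum.Lex.inl_lt_inl_iff.1 hd.1) (ha d).not_gt
  · refine ⟨d, fun y => ?_⟩
    by_contra hy
    push_neg at hy
    exact hd.2 (Sum.Lex.inl_lt_inr _ _) (Sum.Lex.inr_lt_inr_iff.2 hy)

lemma junction_max (h : IsDiscreteLO (α ⊕ₗ β)) {b : β} (hb : ∀ y, b ≤ y) (a0 : α) :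
    ∃ a : α, ∀ x, x ≤ a := by
  obtain ⟨d, hd⟩ := h.2 (toLex (inr b)) ⟨toLex (inl a0), Sum.Lex.inl_lt_inr _ _⟩
  rcases d with d | d
  · refine ⟨d, fun x => ?_⟩
    by_contra hx
    push_neg at hx
    exact hd.2 (Sum.Lex.inl_lt_inl_iff.2 hx) (Sum.Lex.inl_lt_inr _ _)
  · exact absurd (Sum.Lex.inr_lt_inr_iff.1 hd.1) (hb d).not_gt

lemma nomin_left (h : ∀ x : α ⊕ₗ β, ∃ y, y < x) (a : α) : ∃ a', a' < a := by
  obtain ⟨y, hy⟩ := h (toLex (inl a))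
  rcases y with c | c
  · exact ⟨c, Sum.Lex.inl_lt_inl_iff.1 hy⟩
  · exact absurd hy Sum.Lex.not_inr_lt_inl

lemma nomax_right (h : ∀ x : α ⊕ₗ β, ∃ y, x < y) (b : β) : ∃ b', b < b' := by
  obtain ⟨y, hy⟩ := h (toLex (inr b))
  rcases y with c | c
  · exact absurd hy Sum.Lex.not_inr_lt_inl
  · exact ⟨c, Sum.Lex.inr_lt_inr_iff.1 hy⟩

lemma max_right {m : α ⊕ₗ β} (hm : ∀ x, x ≤ m) (hb : Nonempty β) : ∃ b : β, ∀ y, y ≤ b := by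
  rcases m with c | c
  · exact absurd (hm (toLex (inr hb.some))) Sum.Lex.not_inr_le_inl
  · exact ⟨c, fun y => Sum.Lex.inr_le_inr_iff.1 (hm (toLex (inr y)))⟩

lemma min_left {m : α ⊕ₗ β} (hm : ∀ x, m ≤ x) (ha : Nonempty α) : ∃ a : α, ∀ x, a ≤ x := by
  rcases m with c | c
  · exact ⟨c, fun x => Sum.Lex.inl_le_inl_iff.1 (hm (toLex (inl x)))⟩
  · exact absurd (hm (toLex (inl ha.some))) Sum.Lex.not_inr_le_inl

lemma sum_min_inl {a : α} (ha : ∀ x, a ≤ x) : ∀ x : α ⊕ₗ β, toLex (inl a) ≤ x := by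
  rintro (c | c)
  · exact Sum.Lex.inl_le_inl_iff.2 (ha c)
  · exact Sum.Lex.inl_le_inr _ _

lemma sum_max_inr {b : β} (hb : ∀ y, y ≤ b) : ∀ x : α ⊕ₗ β, x ≤ toLex (inr b) := by
  rintro (c | c)
  · exact Sum.Lex.inl_le_inr _ _
  · exact Sum.Lex.inr_le_inr_iff.2 (hb c)

end Helpers

section Prods
open Sum
variable {α : Type*} [LinearOrder α]

-- generic within-copy cover
lemma prodCovBy {γ : Type*} [LinearOrder γ] {g : γ} {a a' : α} (h : a ⋖ a') :
    (toLex (g, a) : γ ×ₗ α) ⋖ toLex (g, a') := by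
  refine ⟨(Prod.Lex.toLex_lt_toLex).2 (Or.inr ⟨rfl, h.1⟩), ?_⟩
  rintro ⟨m, b⟩ h1 h2
  have h1' := (Prod.Lex.toLex_lt_toLex).1 h1
  have h2' := (Prod.Lex.toLex_lt_toLex).1 h2
  dsimp only at h1' h2'
  rcases h1' with h1' | ⟨rfl, h1'⟩
  · rcases h2' with h2' | ⟨rfl, h2'⟩
    · exact lt_asymm h1' h2'
    · exact lt_irrefl _ h1'
  · rcases h2' with h2' | ⟨heq, h2'⟩
    · exact lt_irrefl _ h2'
    · exact h.2 h1' h2'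

lemma natProdCovByStep {n : ℕ} {a b : α} (ha : ∀ x, x ≤ a) (hb : ∀ x, b ≤ x) :
    (toLex (n, a) : ℕ ×ₗ α) ⋖ toLex (n + 1, b) := by
  refine ⟨(Prod.Lex.toLex_lt_toLex).2 (Or.inl (by omega)), ?_⟩
  rintro ⟨m, c⟩ h1 h2
  rcases (Prod.Lex.toLex_lt_toLex).1 h1 with h1' | ⟨rfl, h1'⟩
  · rcases (Prod.Lex.toLex_lt_toLex).1 h2 with h2' | ⟨he, h2'⟩
    · omega
    · exact absurd h2' (hb c).not_gt
  · exact absurd h1' (ha c).not_gt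

lemma dualNatProdCovByStep {n : ℕ} {a b : α} (ha : ∀ x, x ≤ a) (hb : ∀ x, b ≤ x) :
    (toLex (OrderDual.toDual (n + 1), a) : ℕᵒᵈ ×ₗ α) ⋖ toLex (OrderDual.toDual n, b) := by
  refine ⟨(Prod.Lex.toLex_lt_toLex).2 (Or.inl (by exact OrderDual.toDual_lt_toDual.2 (by omega))), ?_⟩
  rintro ⟨m, c⟩ h1 h2
  rcases (Prod.Lex.toLex_lt_toLex).1 h1 with h1' | ⟨he, h1'⟩
  · rcases (Prod.Lex.toLex_lt_toLex).1 h2 with h2' | ⟨he, h2'⟩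
    · have g1 : (OrderDual.ofDual m : ℕ) < n + 1 := h1'
      have g2 : (n : ℕ) < OrderDual.ofDual m := h2'
      omega
    · exact absurd h2' (hb c).not_gt
  · exact absurd h1' (ha c).not_gt

lemma natProd_noMax (x : ℕ ×ₗ α) : ∃ y, x < y := by
  obtain ⟨n, a⟩ := x
  exact ⟨toLex (n + 1, a), (Prod.Lex.toLex_lt_toLex).2 (Or.inl (by omega))⟩

lemma dualNatProd_noMin (x : ℕᵒᵈ ×ₗ α) : ∃ y, y < x := by
  obtain ⟨n, a⟩ := x
  refine ⟨toLex (OrderDual.toDual (OrderDual.ofDual n + 1), a), (Prod.Lex.toLex_lt_toLex).2 (Or.inl ?_)⟩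
  exact Nat.lt_succ_self (OrderDual.ofDual n)

lemma natProd_min {a : α} (ha : ∀ x, a ≤ x) (x : ℕ ×ₗ α) : toLex (0, a) ≤ x := by
  obtain ⟨n, c⟩ := x
  rcases Nat.eq_zero_or_pos n with rfl | hn
  · exact (Prod.Lex.toLex_le_toLex).2 (Or.inr ⟨rfl, ha c⟩)
  · exact (Prod.Lex.toLex_le_toLex).2 (Or.inl hn)

lemma dualNatProd_max {a : α} (ha : ∀ x, x ≤ a) (x : ℕᵒᵈ ×ₗ α) :
    x ≤ toLex (OrderDual.toDual 0, a) := by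
  obtain ⟨n, c⟩ := x
  rcases Nat.eq_zero_or_pos (OrderDual.ofDual n) with hn | hn
  · refine (Prod.Lex.toLex_le_toLex).2 (Or.inr ⟨?_, ha c⟩)
    exact OrderDual.ofDual_inj.1 hn
  · exact (Prod.Lex.toLex_le_toLex).2 (Or.inl hn)

lemma discrete_natProd (hA : IsDiscreteLO α)
    (hmin : ∃ m : α, ∀ x, m ≤ x) (hmax : ∃ m : α, ∀ x, x ≤ m) :
    IsDiscreteLO (ℕ ×ₗ α) := by
  obtain ⟨m0, hm0⟩ := hmin
  obtain ⟨m1, hm1⟩ := hmax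
  constructor
  · rintro ⟨n, a⟩ -
    by_cases hm : ∃ a', a < a'
    · obtain ⟨a', ha'⟩ := hA.1 a hm
      exact ⟨_, prodCovBy ha'⟩
    · push_neg at hm
      exact ⟨_, natProdCovByStep (fun x => hm x) hm0⟩
  · rintro ⟨n, a⟩ ⟨c, hc⟩
    by_cases hm : ∃ a', a' < a
    · obtain ⟨a', ha'⟩ := hA.2 a hm
      exact ⟨_, prodCovBy ha'⟩
    · push_neg at hm
      have hn : n ≠ 0 := by
        rintro rfl
        obtain ⟨k, b⟩ := c
        rcases (Prod.Lex.toLex_lt_toLex).1 hc with h' | ⟨he, h'⟩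
        · omega
        · exact absurd h' (hm b).not_gt
      obtain ⟨k, rfl⟩ : ∃ k, n = k + 1 := ⟨n - 1, by omega⟩
      exact ⟨_, natProdCovByStep hm1 (fun x => hm x)⟩

lemma discrete_dualNatProd (hA : IsDiscreteLO α)
    (hmin : ∃ m : α, ∀ x, m ≤ x) (hmax : ∃ m : α, ∀ x, x ≤ m) :
    IsDiscreteLO (ℕᵒᵈ ×ₗ α) := by
  obtain ⟨m0, hm0⟩ := hmin
  obtain ⟨m1, hm1⟩ := hmax
  constructor
  · rintro ⟨n, a⟩ ⟨c, hc⟩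
    by_cases hm : ∃ a', a < a'
    · obtain ⟨a', ha'⟩ := hA.1 a hm
      exact ⟨_, prodCovBy ha'⟩
    · push_neg at hm
      have hn : OrderDual.ofDual n ≠ 0 := by
        intro h0
        obtain ⟨k, b⟩ := c
        rcases (Prod.Lex.toLex_lt_toLex).1 hc with h' | ⟨he, h'⟩
        · have : (OrderDual.ofDual k : ℕ) < OrderDual.ofDual n := h'
          omega
        · exact absurd h' (hm b).not_gt
      obtain ⟨k, hk⟩ := Nat.exists_eq_succ_of_ne_zero hn
      have hcov := dualNatProdCovByStep (α := α) (n := k) (fun x => hm x) hm0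
      have hne : n = OrderDual.toDual (k + 1) := OrderDual.ofDual_inj.1 hk
      rw [hne]
      exact ⟨_, hcov⟩
  · rintro ⟨n, a⟩ -
    by_cases hm : ∃ a', a' < a
    · obtain ⟨a', ha'⟩ := hA.2 a hm
      exact ⟨_, prodCovBy ha'⟩
    · push_neg at hm
      exact ⟨_, dualNatProdCovByStep (α := α) (n := OrderDual.ofDual n) hm1 (fun x => hm x)⟩

end Prods

section ProdExtract
variable {α : Type*} [LinearOrder α]

private lemma pl_lt {n m : ℕ} {a b : α} :
    (toLex (n, a) : ℕ ×ₗ α) < toLex (m, b) ↔ n < m ∨ n = m ∧ a < b := Prod.Lex.toLex_lt_toLex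

private lemma pl_le {n m : ℕ} {a b : α} :
    (toLex (n, a) : ℕ ×ₗ α) ≤ toLex (m, b) ↔ n < m ∨ n = m ∧ a ≤ b := Prod.Lex.toLex_le_toLex

private lemma dpl_lt {n m : ℕ} {a b : α} :
    (toLex (OrderDual.toDual n, a) : ℕᵒᵈ ×ₗ α) < toLex (OrderDual.toDual m, b) ↔
      m < n ∨ n = m ∧ a < b := by
  rw [Prod.Lex.toLex_lt_toLex]
  constructor
  · rintro (h | ⟨h, h2⟩)
    · exact Or.inl h
    · exact Or.inr ⟨OrderDual.toDual_inj.1 h, h2⟩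
  · rintro (h | ⟨h, h2⟩)
    · exact Or.inl h
    · exact Or.inr ⟨by rw [h], h2⟩

private lemma dpl_le {n m : ℕ} {a b : α} :
    (toLex (OrderDual.toDual n, a) : ℕᵒᵈ ×ₗ α) ≤ toLex (OrderDual.toDual m, b) ↔
      m < n ∨ n = m ∧ a ≤ b := by
  rw [Prod.Lex.toLex_le_toLex]
  constructor
  · rintro (h | ⟨h, h2⟩)
    · exact Or.inl h
    · exact Or.inr ⟨OrderDual.toDual_inj.1 h, h2⟩
  · rintro (h | ⟨h, h2⟩)
    · exact Or.inl h
    · exact Or.inr ⟨by rw [h], h2⟩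

lemma discrete_of_natProd (h : IsDiscreteLO (ℕ ×ₗ α)) : IsDiscreteLO α := by
  constructor
  · rintro a ⟨c, hc⟩
    obtain ⟨d, hd⟩ := h.1 (toLex (0, a)) ⟨toLex (0, c), pl_lt.2 (Or.inr ⟨rfl, hc⟩)⟩
    obtain ⟨m, b⟩ := d
    have hdle : (toLex (m, b) : ℕ ×ₗ α) ≤ toLex (0, c) :=
      le_of_not_gt (hd.2 (pl_lt.2 (Or.inr ⟨rfl, hc⟩)))
    have hm : m = 0 := by rcases pl_le.1 hdle with h' | ⟨h', _⟩ <;> omega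
    subst hm
    have hab : a < b := by
      rcases pl_lt.1 hd.1 with h' | ⟨_, h'⟩
      · omega
      · exact h'
    refine ⟨b, hab, fun e h1 h2 => ?_⟩
    exact hd.2 (pl_lt.2 (Or.inr ⟨rfl, h1⟩)) (pl_lt.2 (Or.inr ⟨rfl, h2⟩))
  · rintro a ⟨c, hc⟩
    obtain ⟨d, hd⟩ := h.2 (toLex (1, a)) ⟨toLex (1, c), pl_lt.2 (Or.inr ⟨rfl, hc⟩)⟩
    obtain ⟨m, b⟩ := d
    have hdge : (toLex (1, c) : ℕ ×ₗ α) ≤ toLex (m, b) :=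
      le_of_not_gt (fun hlt => hd.2 hlt (pl_lt.2 (Or.inr ⟨rfl, hc⟩)))
    have hm1 : m < 1 ∨ m = 1 ∧ b < a := pl_lt.1 hd.1
    have hm2 : 1 < m ∨ 1 = m ∧ c ≤ b := pl_le.1 hdge
    have hm : m = 1 := by omega
    subst hm
    have hba : b < a := by rcases hm1 with h' | ⟨_, h'⟩; omega; exact h'
    refine ⟨b, hba, fun e h1 h2 => ?_⟩
    exact hd.2 (pl_lt.2 (Or.inr ⟨rfl, h1⟩)) (pl_lt.2 (Or.inr ⟨rfl, h2⟩))

lemma natProd_link_max (h : IsDiscreteLO (ℕ ×ₗ α)) {m : α} (hm : ∀ x, x ≤ m) :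
    ∃ b : α, ∀ y, b ≤ y := by
  obtain ⟨d, hd⟩ := h.1 (toLex (0, m)) ⟨toLex (1, m), pl_lt.2 (Or.inl one_pos)⟩
  obtain ⟨k, b⟩ := d
  have hk : 0 < k := by
    rcases pl_lt.1 hd.1 with h' | ⟨_, h'⟩
    · exact h'
    · exact absurd h' (hm b).not_gt
  refine ⟨b, fun y => le_of_not_gt fun hy => ?_⟩
  exact hd.2 (pl_lt.2 (Or.inl hk)) (pl_lt.2 (Or.inr ⟨rfl, hy⟩))

lemma natProd_link_min (h : IsDiscreteLO (ℕ ×ₗ α)) {m : α} (hm : ∀ x, m ≤ x) :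
    ∃ b : α, ∀ y, y ≤ b := by
  obtain ⟨d, hd⟩ := h.2 (toLex (1, m)) ⟨toLex (0, m), pl_lt.2 (Or.inl one_pos)⟩
  obtain ⟨k, b⟩ := d
  have hk : k = 0 := by
    rcases pl_lt.1 hd.1 with h' | ⟨h', h''⟩
    · omega
    · exact absurd h'' (hm b).not_gt
  subst hk
  refine ⟨b, fun y => le_of_not_gt fun hy => ?_⟩
  exact hd.2 (pl_lt.2 (Or.inr ⟨rfl, hy⟩)) (pl_lt.2 (Or.inl one_pos))

lemma natProd_min_extract {m : ℕ ×ₗ α} (hm : ∀ x, m ≤ x) : ∃ a : α, ∀ x, a ≤ x := by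
  obtain ⟨n, a⟩ := m
  refine ⟨a, fun x => ?_⟩
  rcases pl_le.1 (hm (toLex (n, x))) with h' | ⟨_, h'⟩
  · omega
  · exact h'

lemma dualNatProd_max_extract {m : ℕᵒᵈ ×ₗ α} (hm : ∀ x, x ≤ m) : ∃ a : α, ∀ x, x ≤ a := by
  obtain ⟨n, a⟩ := m
  refine ⟨a, fun x => ?_⟩
  have := hm (toLex (n, x))
  rcases (Prod.Lex.toLex_le_toLex).1 this with h' | ⟨_, h'⟩
  · exact absurd h' (lt_irrefl _)
  · exact h'

lemma discrete_of_dualNatProd (h : IsDiscreteLO (ℕᵒᵈ ×ₗ α)) : IsDiscreteLO α := by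
  constructor
  · rintro a ⟨c, hc⟩
    obtain ⟨d, hd⟩ := h.1 (toLex (OrderDual.toDual 1, a))
      ⟨toLex (OrderDual.toDual 1, c), dpl_lt.2 (Or.inr ⟨rfl, hc⟩)⟩
    obtain ⟨k, b⟩ := d
    cases k using OrderDual.rec
    rename_i k
    have hdle : (toLex (OrderDual.toDual k, b) : ℕᵒᵈ ×ₗ α) ≤ toLex (OrderDual.toDual 1, c) :=
      le_of_not_gt (hd.2 (dpl_lt.2 (Or.inr ⟨rfl, hc⟩)))
    have h1 := dpl_lt.1 hd.1
    have h2 := dpl_le.1 hdle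
    have hk : k = 1 := by omega
    subst hk
    have hab : a < b := by rcases h1 with h' | ⟨_, h'⟩; omega; exact h'
    refine ⟨b, hab, fun e h1 h2 => ?_⟩
    exact hd.2 (dpl_lt.2 (Or.inr ⟨rfl, h1⟩)) (dpl_lt.2 (Or.inr ⟨rfl, h2⟩))
  · rintro a ⟨c, hc⟩
    obtain ⟨d, hd⟩ := h.2 (toLex (OrderDual.toDual 0, a))
      ⟨toLex (OrderDual.toDual 0, c), dpl_lt.2 (Or.inr ⟨rfl, hc⟩)⟩
    obtain ⟨k, b⟩ := d
    cases k using OrderDual.rec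
    rename_i k
    have hdge : (toLex (OrderDual.toDual 0, c) : ℕᵒᵈ ×ₗ α) ≤ toLex (OrderDual.toDual k, b) :=
      le_of_not_gt (fun hlt => hd.2 hlt (dpl_lt.2 (Or.inr ⟨rfl, hc⟩)))
    have h1 := dpl_lt.1 hd.1
    have h2 := dpl_le.1 hdge
    have hk : k = 0 := by omega
    subst hk
    have hba : b < a := by rcases h1 with h' | ⟨_, h'⟩; omega; exact h'
    refine ⟨b, hba, fun e h1 h2 => ?_⟩
    exact hd.2 (dpl_lt.2 (Or.inr ⟨rfl, h1⟩)) (dpl_lt.2 (Or.inr ⟨rfl, h2⟩))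

lemma dualNatProd_link_min (h : IsDiscreteLO (ℕᵒᵈ ×ₗ α)) {m : α} (hm : ∀ x, m ≤ x) :
    ∃ b : α, ∀ y, y ≤ b := by
  obtain ⟨d, hd⟩ := h.2 (toLex (OrderDual.toDual 0, m))
    ⟨toLex (OrderDual.toDual 1, m), dpl_lt.2 (Or.inl one_pos)⟩
  obtain ⟨k, b⟩ := d
  cases k using OrderDual.rec
  rename_i k
  have hk : 0 < k := by
    rcases dpl_lt.1 hd.1 with h' | ⟨h', h''⟩
    · omega
    · exact absurd h'' (hm b).not_gt
  refine ⟨b, fun y => le_of_not_gt fun hy => ?_⟩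
  exact hd.2 (dpl_lt.2 (Or.inr ⟨rfl, hy⟩)) (dpl_lt.2 (Or.inl hk))

lemma dualNatProd_link_max (h : IsDiscreteLO (ℕᵒᵈ ×ₗ α)) {m : α} (hm : ∀ x, x ≤ m) :
    ∃ b : α, ∀ y, b ≤ y := by
  obtain ⟨d, hd⟩ := h.1 (toLex (OrderDual.toDual 1, m))
    ⟨toLex (OrderDual.toDual 0, m), dpl_lt.2 (Or.inl one_pos)⟩
  obtain ⟨k, b⟩ := d
  cases k using OrderDual.rec
  rename_i k
  have hk : k = 0 := by
    rcases dpl_lt.1 hd.1 with h' | ⟨h', h''⟩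
    · omega
    · exact absurd h'' (hm b).not_gt
  subst hk
  refine ⟨b, fun y => le_of_not_gt fun hy => ?_⟩
  exact hd.2 (dpl_lt.2 (Or.inl one_pos)) (dpl_lt.2 (Or.inr ⟨rfl, hy⟩))

end ProdExtract

section Isos
open Sum
variable (α β : Type*) [LinearOrder α] [LinearOrder β]

def mkOrderIso {γ δ : Type*} [LinearOrder γ] [LinearOrder δ] (e : γ ≃ δ)
    (h : StrictMono e) : γ ≃o δ := ⟨e, h.le_iff_le⟩

lemma natlex_lt {γ : Type*} [LinearOrder γ] {n m : ℕ} {a b : γ} :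
    (toLex (n, a) : ℕ ×ₗ γ) < toLex (m, b) ↔ n < m ∨ n = m ∧ a < b := Prod.Lex.toLex_lt_toLex

lemma dnatlex_lt {γ : Type*} [LinearOrder γ] {n m : ℕ} {a b : γ} :
    (toLex (OrderDual.toDual n, a) : ℕᵒᵈ ×ₗ γ) < toLex (OrderDual.toDual m, b) ↔
      m < n ∨ n = m ∧ a < b := by
  rw [Prod.Lex.toLex_lt_toLex]
  constructor
  · rintro (h | ⟨h, h2⟩)
    · exact Or.inl h
    · exact Or.inr ⟨OrderDual.toDual_inj.1 h, h2⟩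
  · rintro (h | ⟨h, h2⟩)
    · exact Or.inl h
    · exact Or.inr ⟨by rw [h], h2⟩

lemma glex_lt {γ δ : Type*} [LinearOrder γ] [LinearOrder δ] {g g' : γ} {a b : δ} :
    (toLex (g, a) : γ ×ₗ δ) < toLex (g', b) ↔ g < g' ∨ g = g' ∧ a < b := Prod.Lex.toLex_lt_toLex

def scf {α' β' : Type*} [LinearOrder α'] [LinearOrder β']
    (e₁ : α ≃o α') (e₂ : β ≃o β') : (α ⊕ₗ β) → (α' ⊕ₗ β')
  | Sum.inl a => toLex (Sum.inl (e₁ a))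
  | Sum.inr b => toLex (Sum.inr (e₂ b))

/-- congruence for lexicographic sums -/
def sumLexCongr' {α' β' : Type*} [LinearOrder α'] [LinearOrder β']
    (e₁ : α ≃o α') (e₂ : β ≃o β') : (α ⊕ₗ β) ≃o (α' ⊕ₗ β') := by
  refine mkOrderIso ⟨scf α β e₁ e₂, scf α' β' e₁.symm e₂.symm, ?_, ?_⟩ ?_
  · rintro (a | b)
    · exact congrArg (fun z => toLex (Sum.inl z)) (e₁.symm_apply_apply a)
    · exact congrArg (fun z => toLex (Sum.inr z)) (e₂.symm_apply_apply b)
  · rintro (a | b)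
    · exact congrArg (fun z => toLex (Sum.inl z)) (e₁.apply_symm_apply a)
    · exact congrArg (fun z => toLex (Sum.inr z)) (e₂.apply_symm_apply b)
  · rintro (a | b) (c | d) h
    · exact Sum.Lex.inl_lt_inl_iff.2 (e₁.strictMono (Sum.Lex.inl_lt_inl_iff.1 h))
    · exact Sum.Lex.inl_lt_inr _ _
    · exact absurd h Sum.Lex.not_inr_lt_inl
    · exact Sum.Lex.inr_lt_inr_iff.2 (e₂.strictMono (Sum.Lex.inr_lt_inr_iff.1 h))

/-- congruence for lexicographic products -/
def prodLexCongr (γ : Type*) {α' : Type*} [LinearOrder γ] [LinearOrder α'] (e : α ≃o α') :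
    (γ ×ₗ α) ≃o (γ ×ₗ α') := by
  refine mkOrderIso ⟨fun x => toLex ((ofLex x).1, e (ofLex x).2),
    fun y => toLex ((ofLex y).1, e.symm (ofLex y).2), ?_, ?_⟩ ?_
  · rintro ⟨g, a⟩
    exact congrArg (fun z => toLex (g, z)) (e.symm_apply_apply a)
  · rintro ⟨g, a⟩
    exact congrArg (fun z => toLex (g, z)) (e.apply_symm_apply a)
  · rintro ⟨g, a⟩ ⟨g', b⟩ h
    rcases glex_lt.1 h with h' | ⟨h', h''⟩
    · exact glex_lt.2 (Or.inl h')
    · exact glex_lt.2 (Or.inr ⟨h', e.strictMono h''⟩)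

def sumEmptyIso (hβ : IsEmpty β) : (α ⊕ₗ β) ≃o α := by
  refine mkOrderIso ⟨fun x => (ofLex x).elim id hβ.elim, fun a => toLex (inl a), ?_, ?_⟩ ?_
  · rintro (a | b)
    · rfl
    · exact hβ.elim b
  · intro a; rfl
  · rintro (a | b) (c | d) h
    · exact Sum.Lex.inl_lt_inl_iff.1 h
    · exact hβ.elim d
    · exact hβ.elim b
    · exact hβ.elim b

def emptySumIso (hα : IsEmpty α) : (α ⊕ₗ β) ≃o β := by
  refine mkOrderIso ⟨fun x => (ofLex x).elim hα.elim id, fun b => toLex (inr b), ?_, ?_⟩ ?_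
  · rintro (a | b)
    · exact hα.elim a
    · rfl
  · intro b; rfl
  · rintro (a | b) (c | d) h
    · exact hα.elim a
    · exact hα.elim a
    · exact hα.elim c
    · exact Sum.Lex.inr_lt_inr_iff.1 h

def r1f : ℕ ×ₗ (α ⊕ₗ β) → α ⊕ₗ (ℕ ×ₗ (β ⊕ₗ α))
  | (0, Sum.inl a) => toLex (Sum.inl a)
  | (Nat.succ n, Sum.inl a) => toLex (Sum.inr (toLex (n, toLex (Sum.inr a))))
  | (n, Sum.inr b) => toLex (Sum.inr (toLex (n, toLex (Sum.inl b))))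

def r1g : α ⊕ₗ (ℕ ×ₗ (β ⊕ₗ α)) → ℕ ×ₗ (α ⊕ₗ β)
  | Sum.inl a => toLex (0, toLex (Sum.inl a))
  | Sum.inr (n, Sum.inl b) => toLex (n, toLex (Sum.inr b))
  | Sum.inr (n, Sum.inr a) => toLex (n + 1, toLex (Sum.inl a))

lemma natlex_inl_lt_inr {α' β' : Type*} [LinearOrder α'] [LinearOrder β'] {n m : ℕ}
    (h : n ≤ m) (x : α') (y : β') :
    (toLex (n, (toLex (Sum.inl x) : α' ⊕ₗ β')) : ℕ ×ₗ (α' ⊕ₗ β')) <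
      toLex (m, toLex (Sum.inr y)) :=
  natlex_lt.2 (h.lt_or_eq.imp id (fun he => ⟨he, Sum.Lex.inl_lt_inr _ _⟩))

lemma dnatlex_inl_lt_inr {α' β' : Type*} [LinearOrder α'] [LinearOrder β'] {n m : ℕ}
    (h : m ≤ n) (x : α') (y : β') :
    (toLex (OrderDual.toDual n, (toLex (Sum.inl x) : α' ⊕ₗ β')) : ℕᵒᵈ ×ₗ (α' ⊕ₗ β')) <
      toLex (OrderDual.toDual m, toLex (Sum.inr y)) :=
  dnatlex_lt.2 (h.lt_or_eq.imp id (fun he => ⟨he.symm, Sum.Lex.inl_lt_inr _ _⟩))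

lemma r1_li : Function.LeftInverse (r1g α β) (r1f α β) := by
  rintro ⟨(_ | n), (a | b)⟩ <;> rfl

lemma r1_ri : Function.RightInverse (r1g α β) (r1f α β) := by
  rintro ((a | ⟨(_ | n), (b | a)⟩)) <;> rfl

lemma r1_mono : StrictMono (r1f α β) := by
  rintro ⟨(_ | n), (a | b)⟩ ⟨(_ | m), (c | d)⟩ h <;>
    rcases natlex_lt.1 h with h' | ⟨h', h''⟩ <;>
    first
      | omega
      | exact absurd h'' Sum.Lex.not_inr_lt_inl
      | exact Sum.Lex.inl_lt_inr _ _
      | exact Sum.Lex.inl_lt_inl_iff.2 (Sum.Lex.inl_lt_inl_iff.1 h'')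
      | exact Sum.Lex.inr_lt_inr_iff.2 (natlex_lt.2 (Or.inl (by omega)))
      | exact Sum.Lex.inr_lt_inr_iff.2 (natlex_lt.2
          (Or.inr ⟨by omega, Sum.Lex.inl_lt_inl_iff.2 (Sum.Lex.inr_lt_inr_iff.1 h'')⟩))
      | exact Sum.Lex.inr_lt_inr_iff.2 (natlex_lt.2
          (Or.inr ⟨by omega, Sum.Lex.inr_lt_inr_iff.2 (Sum.Lex.inl_lt_inl_iff.1 h'')⟩))
      | exact Sum.Lex.inr_lt_inr_iff.2 (natlex_lt.2 (Or.inl (Nat.succ_pos _)))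
      | exact Sum.Lex.inr_lt_inr_iff.2 (natlex_inl_lt_inr (by omega) _ _)
      | exact Sum.Lex.inr_lt_inr_iff.2 (natlex_inl_lt_inr (Nat.zero_le _) _ _)

/-- `ω·(α+β) ≃ α + ω·(β+α)` -/
def omegaShiftIso : (ℕ ×ₗ (α ⊕ₗ β)) ≃o (α ⊕ₗ (ℕ ×ₗ (β ⊕ₗ α))) :=
  mkOrderIso ⟨r1f α β, r1g α β, r1_li α β, r1_ri α β⟩ (r1_mono α β)

def r2f : ℕᵒᵈ ×ₗ (α ⊕ₗ β) → (ℕᵒᵈ ×ₗ (β ⊕ₗ α)) ⊕ₗ β := fun x =>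
  match ofLex (ofLex x).2, OrderDual.ofDual (ofLex x).1 with
  | Sum.inl a, n => toLex (Sum.inl (toLex (OrderDual.toDual n, toLex (Sum.inr a))))
  | Sum.inr b, 0 => toLex (Sum.inr b)
  | Sum.inr b, Nat.succ n => toLex (Sum.inl (toLex (OrderDual.toDual n, toLex (Sum.inl b))))

def r2g : (ℕᵒᵈ ×ₗ (β ⊕ₗ α)) ⊕ₗ β → ℕᵒᵈ ×ₗ (α ⊕ₗ β) := fun y =>
  match ofLex y with
  | Sum.inl p =>
    match ofLex (ofLex p).2 with
    | Sum.inr a => toLex ((ofLex p).1, toLex (Sum.inl a))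
    | Sum.inl b =>
        toLex (OrderDual.toDual (OrderDual.ofDual (ofLex p).1 + 1), toLex (Sum.inr b))
  | Sum.inr b => toLex (OrderDual.toDual 0, toLex (Sum.inr b))

lemma r2_li : Function.LeftInverse (r2g α β) (r2f α β) := by
  rintro ⟨k, (a | b)⟩
  · cases k using OrderDual.rec
    rfl
  · cases k using OrderDual.rec
    rename_i k
    cases k <;> rfl

lemma r2_ri : Function.RightInverse (r2g α β) (r2f α β) := by
  rintro (⟨k, (b | a)⟩ | b)
  · cases k using OrderDual.rec
    rfl
  · cases k using OrderDual.rec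
    rfl
  · rfl

lemma r2_mono : StrictMono (r2f α β) := by
  intro x y h
  obtain ⟨k1, s1⟩ := x
  obtain ⟨k2, s2⟩ := y
  cases k1 using OrderDual.rec
  rename_i n
  cases k2 using OrderDual.rec
  rename_i m
  have H := dnatlex_lt.1 h
  rcases s1 with a | b <;> rcases s2 with c | d
  · -- inl / inl
    show toLex (Sum.inl (toLex (OrderDual.toDual n, toLex (Sum.inr a)))) <
      toLex (Sum.inl (toLex (OrderDual.toDual m, toLex (Sum.inr c))))
    refine Sum.Lex.inl_lt_inl_iff.2 (dnatlex_lt.2 ?_)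
    rcases H with h' | ⟨h', h''⟩
    · exact Or.inl h'
    · exact Or.inr ⟨h', Sum.Lex.inr_lt_inr_iff.2 (Sum.Lex.inl_lt_inl_iff.1 h'')⟩
  · -- inl / inr
    cases m with
    | zero =>
      show toLex (Sum.inl (toLex (OrderDual.toDual n, toLex (Sum.inr a)))) < toLex (Sum.inr d)
      exact Sum.Lex.inl_lt_inr _ _
    | succ m =>
      show toLex (Sum.inl (toLex (OrderDual.toDual n, toLex (Sum.inr a)))) <
        toLex (Sum.inl (toLex (OrderDual.toDual m, toLex (Sum.inl d))))
      refine Sum.Lex.inl_lt_inl_iff.2 (dnatlex_lt.2 (Or.inl ?_))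
      rcases H with h' | ⟨h', h''⟩ <;> omega
  · -- inr / inl
    cases n with
    | zero =>
      exfalso
      rcases H with h' | ⟨h', h''⟩
      · omega
      · exact Sum.Lex.not_inr_lt_inl h''
    | succ n =>
      show toLex (Sum.inl (toLex (OrderDual.toDual n, toLex (Sum.inl b)))) <
        toLex (Sum.inl (toLex (OrderDual.toDual m, toLex (Sum.inr c))))
      refine Sum.Lex.inl_lt_inl_iff.2 ?_
      rcases H with h' | ⟨h', h''⟩
      · exact dnatlex_inl_lt_inr (by omega) _ _
      · exact absurd h'' Sum.Lex.not_inr_lt_inl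
  · -- inr / inr
    cases n with
    | zero =>
      cases m with
      | zero =>
        show (toLex (Sum.inr b) : (ℕᵒᵈ ×ₗ (β ⊕ₗ α)) ⊕ₗ β) < toLex (Sum.inr d)
        rcases H with h' | ⟨h', h''⟩
        · omega
        · exact Sum.Lex.inr_lt_inr_iff.2 (Sum.Lex.inr_lt_inr_iff.1 h'')
      | succ m =>
        exfalso
        rcases H with h' | ⟨h', h''⟩ <;> omega
    | succ n =>
      cases m with
      | zero =>
        show toLex (Sum.inl (toLex (OrderDual.toDual n, toLex (Sum.inl b)))) <
          (toLex (Sum.inr d) : (ℕᵒᵈ ×ₗ (β ⊕ₗ α)) ⊕ₗ β)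
        exact Sum.Lex.inl_lt_inr _ _
      | succ m =>
        show toLex (Sum.inl (toLex (OrderDual.toDual n, toLex (Sum.inl b)))) <
          toLex (Sum.inl (toLex (OrderDual.toDual m, toLex (Sum.inl d))))
        refine Sum.Lex.inl_lt_inl_iff.2 (dnatlex_lt.2 ?_)
        rcases H with h' | ⟨h', h''⟩
        · exact Or.inl (by omega)
        · exact Or.inr ⟨by omega, Sum.Lex.inl_lt_inl_iff.2 (Sum.Lex.inr_lt_inr_iff.1 h'')⟩

/-- `ω*·(α+β) ≃ ω*·(β+α) + β` -/
def omegaStarShiftIso : (ℕᵒᵈ ×ₗ (α ⊕ₗ β)) ≃o ((ℕᵒᵈ ×ₗ (β ⊕ₗ α)) ⊕ₗ β) :=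
  mkOrderIso ⟨r2f α β, r2g α β, r2_li α β, r2_ri α β⟩ (r2_mono α β)

end Isos

section Build
open Sum

lemma sum_max_inl {α β : Type*} [LinearOrder α] [LinearOrder β] (hβ : IsEmpty β) {a : α}
    (ha : ∀ x, x ≤ a) : ∀ x : α ⊕ₗ β, x ≤ toLex (inl a) := by
  rintro (c | c)
  · exact Sum.Lex.inl_le_inl_iff.2 (ha c)
  · exact hβ.elim c

lemma sum_min_inr {α β : Type*} [LinearOrder α] [LinearOrder β] (hα : IsEmpty α) {b : β}
    (hb : ∀ y, b ≤ y) : ∀ x : α ⊕ₗ β, toLex (inr b) ≤ x := by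
  rintro (c | c)
  · exact hα.elim c
  · exact Sum.Lex.inr_le_inr_iff.2 (hb c)

lemma discrete_of_isEmpty {α : Type*} [LinearOrder α] (h : IsEmpty α) : IsDiscreteLO α :=
  ⟨fun a => isEmptyElim a, fun a => isEmptyElim a⟩

def emptyOrderIso (α β : Type*) [LinearOrder α] [LinearOrder β] (hα : IsEmpty α)
    (hβ : IsEmpty β) : α ≃o β :=
  haveI := hα; haveI := hβ
  ⟨Equiv.equivOfIsEmpty α β, fun {a} => isEmptyElim a⟩

lemma LOfp_of_isEmpty (K : BLinOrd) (h : IsEmpty K.carrier) : LOfp K :=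
  LOfp.iso LOfp.empty ⟨emptyOrderIso (Fin 0) K.carrier inferInstance h⟩

lemma or11_fp {K : BLinOrd} (h : dLOfp11 K ∨ IsEmpty K.carrier) : LOfp K :=
  h.elim (·.1) (LOfp_of_isEmpty K)

lemma or11_discrete {K : BLinOrd} (h : dLOfp11 K ∨ IsEmpty K.carrier) :
    IsDiscreteLO K.carrier :=
  h.elim (·.2.1) discrete_of_isEmpty

lemma dLOfp11_iso {A B : BLinOrd} (e : A.carrier ≃o B.carrier) (h : dLOfp11 A) : dLOfp11 B := by
  obtain ⟨hfp, hd, ⟨m0, hm0⟩, ⟨m1, hm1⟩⟩ := h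
  refine ⟨LOfp.iso hfp ⟨e⟩, discrete_of_iso e hd, ⟨e m0, fun x => ?_⟩, ⟨e m1, fun x => ?_⟩⟩
  · simpa using e.monotone (hm0 (e.symm x))
  · simpa using e.monotone (hm1 (e.symm x))

lemma dLOfp11_sum {A B : BLinOrd} (hA : dLOfp11 A) (hB : dLOfp11 B) :
    dLOfp11 (BLinOrd.of (A.carrier ⊕ₗ B.carrier)) := by
  refine ⟨LOfp.add hA.1 hB.1, ?_, ?_, ?_⟩
  · exact hA.2.1.sum hB.2.1 (fun _ _ _ => hB.2.2.1) (fun _ _ _ => hA.2.2.2)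
  · obtain ⟨m, hm⟩ := hA.2.2.1
    exact ⟨toLex (Sum.inl m), sum_min_inl hm⟩
  · obtain ⟨m, hm⟩ := hB.2.2.2
    exact ⟨toLex (Sum.inr m), sum_max_inr hm⟩

lemma dLOfp11_sum' {A B : BLinOrd} (hA : dLOfp11 A ∨ IsEmpty A.carrier)
    (hB : dLOfp11 B ∨ IsEmpty B.carrier) :
    dLOfp11 (BLinOrd.of (A.carrier ⊕ₗ B.carrier)) ∨ IsEmpty (A.carrier ⊕ₗ B.carrier) := by
  rcases hA with hA | hA
  · rcases hB with hB | hB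
    · exact Or.inl (dLOfp11_sum hA hB)
    · exact Or.inl (dLOfp11_iso (sumEmptyIso _ _ hB).symm hA)
  · rcases hB with hB | hB
    · exact Or.inl (dLOfp11_iso (emptySumIso _ _ hA).symm hB)
    · refine Or.inr ⟨fun x => ?_⟩
      rcases x with a | b
      · exact hA.elim a
      · exact hB.elim b

/-- `K + K₂·ω` is fp, discrete, has a minimum and no maximum. -/
lemma part_min_noMax {K K₂ : BLinOrd} (hK : dLOfp11 K ∨ IsEmpty K.carrier) (hK₂ : dLOfp11 K₂) :
    LOfp (BLinOrd.of (K.carrier ⊕ₗ (ℕ ×ₗ K₂.carrier))) ∧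
    IsDiscreteLO (K.carrier ⊕ₗ (ℕ ×ₗ K₂.carrier)) ∧
    (∃ m : K.carrier ⊕ₗ (ℕ ×ₗ K₂.carrier), ∀ x, m ≤ x) ∧
    (∀ x : K.carrier ⊕ₗ (ℕ ×ₗ K₂.carrier), ∃ y, x < y) := by
  obtain ⟨m2, hm2⟩ := hK₂.2.2.1
  refine ⟨LOfp.add (or11_fp hK) (LOfp.mulOmega hK₂.1), ?_, ?_, ?_⟩
  · refine (or11_discrete hK).sum (discrete_natProd hK₂.2.1 hK₂.2.2.1 hK₂.2.2.2) ?_ ?_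
    · exact fun _ _ _ => ⟨toLex (0, m2), natProd_min hm2⟩
    · rintro b hb ⟨a⟩
      rcases hK with hK | hK
      · exact hK.2.2.2
      · exact hK.elim a
  · rcases hK with hK | hK
    · obtain ⟨m, hm⟩ := hK.2.2.1
      exact ⟨toLex (Sum.inl m), sum_min_inl hm⟩
    · exact ⟨toLex (Sum.inr (toLex (0, m2))), sum_min_inr hK (natProd_min hm2)⟩
  · rintro (a | p)
    · exact ⟨toLex (Sum.inr (toLex (0, m2))), Sum.Lex.inl_lt_inr _ _⟩
    · obtain ⟨q, hq⟩ := natProd_noMax p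
      exact ⟨toLex (Sum.inr q), Sum.Lex.inr_lt_inr_iff.2 hq⟩

/-- `M₁·ω* + M` is fp, discrete, has a maximum and no minimum. -/
lemma part_noMin_max {M₁ M : BLinOrd} (hM₁ : dLOfp11 M₁) (hM : dLOfp11 M ∨ IsEmpty M.carrier) :
    LOfp (BLinOrd.of ((ℕᵒᵈ ×ₗ M₁.carrier) ⊕ₗ M.carrier)) ∧
    IsDiscreteLO ((ℕᵒᵈ ×ₗ M₁.carrier) ⊕ₗ M.carrier) ∧
    (∀ x : (ℕᵒᵈ ×ₗ M₁.carrier) ⊕ₗ M.carrier, ∃ y, y < x) ∧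
    (∃ m : (ℕᵒᵈ ×ₗ M₁.carrier) ⊕ₗ M.carrier, ∀ x, x ≤ m) := by
  obtain ⟨m1, hm1⟩ := hM₁.2.2.2
  refine ⟨LOfp.add (LOfp.mulOmegaStar hM₁.1) (or11_fp hM), ?_, ?_, ?_⟩
  · refine (discrete_dualNatProd hM₁.2.1 hM₁.2.2.1 hM₁.2.2.2).sum (or11_discrete hM) ?_ ?_
    · rintro a ha ⟨b⟩
      rcases hM with hM | hM
      · exact hM.2.2.1
      · exact hM.elim b
    · exact fun _ _ _ => ⟨toLex (OrderDual.toDual 0, m1), dualNatProd_max hm1⟩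
  · rintro (p | b)
    · obtain ⟨q, hq⟩ := dualNatProd_noMin p
      exact ⟨toLex (Sum.inl q), Sum.Lex.inl_lt_inl_iff.2 hq⟩
    · exact ⟨toLex (Sum.inl (toLex (OrderDual.toDual 0, m1))), Sum.Lex.inl_lt_inr _ _⟩
  · rcases hM with hM | hM
    · obtain ⟨m, hm⟩ := hM.2.2.2
      exact ⟨toLex (Sum.inr m), sum_max_inr hm⟩
    · exact ⟨toLex (Sum.inl (toLex (OrderDual.toDual 0, m1))), sum_max_inl hM (dualNatProd_max hm1)⟩

/-- joining a (min, no max) piece with a (no min, max) piece gives a `dLOfp11` order. -/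
lemma join11 {A B : Type} [LinearOrder A] [LinearOrder B]
    (hA : LOfp (BLinOrd.of A) ∧ IsDiscreteLO A ∧ (∃ m : A, ∀ x, m ≤ x) ∧ (∀ x : A, ∃ y, x < y))
    (hB : LOfp (BLinOrd.of B) ∧ IsDiscreteLO B ∧ (∀ x : B, ∃ y, y < x) ∧ (∃ m : B, ∀ x, x ≤ m)) :
    dLOfp11 (BLinOrd.of (A ⊕ₗ B)) := by
  obtain ⟨hfpA, hdA, ⟨mA, hmA⟩, hnomaxA⟩ := hA
  obtain ⟨hfpB, hdB, hnominB, ⟨mB, hmB⟩⟩ := hB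
  refine ⟨LOfp.add hfpA hfpB, ?_, ⟨toLex (Sum.inl mA), sum_min_inl hmA⟩,
    ⟨toLex (Sum.inr mB), sum_max_inr hmB⟩⟩
  refine hdA.sum hdB ?_ ?_
  · intro a ha _
    obtain ⟨y, hy⟩ := hnomaxA a
    exact absurd hy (ha y).not_gt
  · intro b hb _
    obtain ⟨y, hy⟩ := hnominB b
    exact absurd hy (hb y).not_gt

end Build

section Master
open Sum

lemma isEmpty_of_fin0 : IsEmpty (BLinOrd.of (Fin 0)).carrier := ⟨Fin.elim0⟩

def S10' (α : Type) [LinearOrder α] : Prop :=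
  IsDiscreteLO α → (∃ m : α, ∀ x, m ≤ x) → (∀ a : α, ∃ b, a < b) →
    ∃ L L2 : BLinOrd, (dLOfp11 L ∨ IsEmpty L.carrier) ∧ dLOfp11 L2 ∧
      Nonempty (α ≃o (L.carrier ⊕ₗ (ℕ ×ₗ L2.carrier)))

def S01' (α : Type) [LinearOrder α] : Prop :=
  IsDiscreteLO α → (∀ a : α, ∃ b, b < a) → (∃ m : α, ∀ x, x ≤ m) →
    ∃ L1 L2 : BLinOrd, dLOfp11 L1 ∧ (dLOfp11 L2 ∨ IsEmpty L2.carrier) ∧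
      Nonempty (α ≃o ((ℕᵒᵈ ×ₗ L1.carrier) ⊕ₗ L2.carrier))

def S00' (α : Type) [LinearOrder α] : Prop :=
  IsDiscreteLO α → Nonempty α → (∀ a : α, ∃ b, b < a) → (∀ a : α, ∃ b, a < b) →
    ∃ L1 L L2 : BLinOrd, dLOfp11 L1 ∧ (dLOfp11 L ∨ IsEmpty L.carrier) ∧ dLOfp11 L2 ∧
      Nonempty (α ≃o ((ℕᵒᵈ ×ₗ L1.carrier) ⊕ₗ (L.carrier ⊕ₗ (ℕ ×ₗ L2.carrier))))

lemma S10'_iso {α β : Type} [LinearOrder α] [LinearOrder β] (e : α ≃o β) (h : S10' α) :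
    S10' β := by
  intro hd hmin hnomax
  obtain ⟨m, hm⟩ := hmin
  obtain ⟨L, L2, h1, h2, ⟨f⟩⟩ := h (discrete_of_iso e.symm hd)
    ⟨e.symm m, fun x => by simpa using e.symm.monotone (hm (e x))⟩
    (fun a => ⟨e.symm (Classical.choose (hnomax (e a))), by
      simpa using e.symm.strictMono (Classical.choose_spec (hnomax (e a)))⟩)
  exact ⟨L, L2, h1, h2, ⟨e.symm.trans f⟩⟩

lemma S01'_iso {α β : Type} [LinearOrder α] [LinearOrder β] (e : α ≃o β) (h : S01' α) :
    S01' β := by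
  intro hd hnomin hmax
  obtain ⟨m, hm⟩ := hmax
  obtain ⟨L1, L2, h1, h2, ⟨f⟩⟩ := h (discrete_of_iso e.symm hd)
    (fun a => ⟨e.symm (Classical.choose (hnomin (e a))), by
      simpa using e.symm.strictMono (Classical.choose_spec (hnomin (e a)))⟩)
    ⟨e.symm m, fun x => by simpa using e.symm.monotone (hm (e x))⟩
  exact ⟨L1, L2, h1, h2, ⟨e.symm.trans f⟩⟩

lemma S00'_iso {α β : Type} [LinearOrder α] [LinearOrder β] (e : α ≃o β) (h : S00' α) :
    S00' β := by
  intro hd hne hnomin hnomax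
  obtain ⟨L1, L, L2, h1, h2, h3, ⟨f⟩⟩ := h (discrete_of_iso e.symm hd) ⟨e.symm hne.some⟩
    (fun a => ⟨e.symm (Classical.choose (hnomin (e a))), by
      simpa using e.symm.strictMono (Classical.choose_spec (hnomin (e a)))⟩)
    (fun a => ⟨e.symm (Classical.choose (hnomax (e a))), by
      simpa using e.symm.strictMono (Classical.choose_spec (hnomax (e a)))⟩)
  exact ⟨L1, L, L2, h1, h2, h3, ⟨e.symm.trans f⟩⟩

def shuffle4 (u v w z : Type*) [LinearOrder u] [LinearOrder v] [LinearOrder w]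
    [LinearOrder z] : (u ⊕ₗ (v ⊕ₗ (w ⊕ₗ z))) ≃o ((u ⊕ₗ (v ⊕ₗ w)) ⊕ₗ z) :=
  (sumLexCongr' u _ (OrderIso.refl u) (OrderIso.sumLexAssoc v w z).symm).trans
    (OrderIso.sumLexAssoc u (v ⊕ₗ w) z).symm

theorem masterLOfp {X : BLinOrd} (h : LOfp X) :
    S10' X.carrier ∧ S01' X.carrier ∧ S00' X.carrier := by
  induction h with
  | empty =>
    refine ⟨fun _ hmin _ => ?_, fun _ _ hmax => ?_, fun _ hne _ _ => ?_⟩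
    · exact Fin.elim0 hmin.choose
    · exact Fin.elim0 hmax.choose
    · exact Fin.elim0 hne.some
  | one =>
    refine ⟨fun _ _ hnomax => ?_, fun _ hnomin _ => ?_, fun _ _ hnomin _ => ?_⟩
    · obtain ⟨b, hb⟩ := hnomax ⟨0, Nat.zero_lt_one⟩
      exact absurd hb (by
        have hbe := Subsingleton.elim (α := Fin 1) b ⟨0, Nat.zero_lt_one⟩
        rw [hbe]; exact lt_irrefl _)
    · obtain ⟨b, hb⟩ := hnomin ⟨0, Nat.zero_lt_one⟩
      exact absurd hb (by
        have hbe := Subsingleton.elim (α := Fin 1) b ⟨0, Nat.zero_lt_one⟩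
        rw [hbe]; exact lt_irrefl _)
    · obtain ⟨b, hb⟩ := hnomin ⟨0, Nat.zero_lt_one⟩
      exact absurd hb (by
        have hbe := Subsingleton.elim (α := Fin 1) b ⟨0, Nat.zero_lt_one⟩
        rw [hbe]; exact lt_irrefl _)
  | iso h e ih =>
    obtain ⟨f⟩ := e
    exact ⟨S10'_iso f ih.1, S01'_iso f ih.2.1, S00'_iso f ih.2.2⟩
  | @add X Y hX hY ihX ihY =>
    by_cases hEA : Nonempty X.carrier
    swap
    · have hA : IsEmpty X.carrier := not_nonempty_iff.1 hEA
      have e := (emptySumIso X.carrier Y.carrier hA).symm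
      exact ⟨S10'_iso e ihY.1, S01'_iso e ihY.2.1, S00'_iso e ihY.2.2⟩
    by_cases hEB : Nonempty Y.carrier
    swap
    · have hB : IsEmpty Y.carrier := not_nonempty_iff.1 hEB
      have e := (sumEmptyIso X.carrier Y.carrier hB).symm
      exact ⟨S10'_iso e ihX.1, S01'_iso e ihX.2.1, S00'_iso e ihX.2.2⟩
    refine ⟨?_, ?_, ?_⟩
    -- S10'
    · intro hdisc hmin hnomax
      have hdA := discrete_sum_left hdisc
      have hdB := discrete_sum_right hdisc
      obtain ⟨mm, hmm⟩ := hmin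
      have hminA : ∃ m : X.carrier, ∀ x, m ≤ x := min_left hmm hEA
      have hnomaxB : ∀ b : Y.carrier, ∃ b', b < b' := nomax_right hnomax
      by_cases hBmin : ∃ m : Y.carrier, ∀ y, m ≤ y
      · obtain ⟨bm, hbm⟩ := hBmin
        have hAmax : ∃ a : X.carrier, ∀ x, x ≤ a := junction_max hdisc hbm hEA.some
        have hA11 : dLOfp11 X := ⟨hX, hdA, hminA, hAmax⟩
        obtain ⟨M, M2, hM, hM2, ⟨eB⟩⟩ := ihY.1 hdB ⟨bm, hbm⟩ hnomaxB
        refine ⟨BLinOrd.of (X.carrier ⊕ₗ M.carrier), M2,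
          dLOfp11_sum' (Or.inl hA11) hM, hM2, ?_⟩
        exact ⟨(sumLexCongr' X.carrier Y.carrier (OrderIso.refl X.carrier) eB).trans
          (OrderIso.sumLexAssoc X.carrier M.carrier _).symm⟩
      · have hAnomax : ∀ a : X.carrier, ∃ x, a < x := by
          intro a
          by_contra ha
          push_neg at ha
          exact hBmin (junction_min hdisc (fun x => ha x) hEB.some)
        have hBnomin : ∀ b : Y.carrier, ∃ b', b' < b := by
          intro b
          by_contra hb
          push_neg at hb
          obtain ⟨am, ham⟩ := junction_max hdisc (fun y => hb y) hEA.some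
          obtain ⟨x, hx⟩ := hAnomax am
          exact absurd hx (ham x).not_gt
        obtain ⟨L, L2, hL, hL2, ⟨eA⟩⟩ := ihX.1 hdA hminA hAnomax
        obtain ⟨M1, M, M2, hM1, hM, hM2, ⟨eB⟩⟩ := ihY.2.2 hdB hEB hBnomin hnomaxB
        refine ⟨BLinOrd.of ((L.carrier ⊕ₗ (ℕ ×ₗ L2.carrier)) ⊕ₗ
          ((ℕᵒᵈ ×ₗ M1.carrier) ⊕ₗ M.carrier)), M2,
          Or.inl (join11 (part_min_noMax hL hL2) (part_noMin_max hM1 hM)), hM2, ?_⟩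
        exact ⟨(sumLexCongr' X.carrier Y.carrier eA eB).trans
          (shuffle4 _ _ _ _)⟩
    -- S01'
    · intro hdisc hnomin hmax
      have hdA := discrete_sum_left hdisc
      have hdB := discrete_sum_right hdisc
      obtain ⟨mm, hmm⟩ := hmax
      have hnominA : ∀ a : X.carrier, ∃ b, b < a := nomin_left hnomin
      have hmaxB : ∃ m : Y.carrier, ∀ y, y ≤ m := max_right hmm hEB
      by_cases hAmax : ∃ a : X.carrier, ∀ x, x ≤ a
      · obtain ⟨am, ham⟩ := hAmax
        have hBmin : ∃ m : Y.carrier, ∀ y, m ≤ y := junction_min hdisc ham hEB.some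
        have hB11 : dLOfp11 Y := ⟨hY, hdB, hBmin, hmaxB⟩
        obtain ⟨L1, L2, hL1, hL2, ⟨eA⟩⟩ := ihX.2.1 hdA hnominA ⟨am, ham⟩
        refine ⟨L1, BLinOrd.of (L2.carrier ⊕ₗ Y.carrier), hL1,
          dLOfp11_sum' hL2 (Or.inl hB11), ?_⟩
        exact ⟨(sumLexCongr' X.carrier Y.carrier eA (OrderIso.refl Y.carrier)).trans
          (OrderIso.sumLexAssoc _ L2.carrier Y.carrier)⟩
      · have hAnomax : ∀ a : X.carrier, ∃ x, a < x := by
          intro a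
          by_contra ha
          push_neg at ha
          exact hAmax ⟨a, fun x => ha x⟩
        have hBnomin : ∀ b : Y.carrier, ∃ b', b' < b := by
          intro b
          by_contra hb
          push_neg at hb
          obtain ⟨am, ham⟩ := junction_max hdisc (fun y => hb y) hEA.some
          obtain ⟨x, hx⟩ := hAnomax am
          exact absurd hx (ham x).not_gt
        obtain ⟨K1, K, K2, hK1, hK, hK2, ⟨eA⟩⟩ := ihX.2.2 hdA hEA hnominA hAnomax
        obtain ⟨M1, M, hM1, hM, ⟨eB⟩⟩ := ihY.2.1 hdB hBnomin hmaxB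
        refine ⟨K1, BLinOrd.of ((K.carrier ⊕ₗ (ℕ ×ₗ K2.carrier)) ⊕ₗ
          ((ℕᵒᵈ ×ₗ M1.carrier) ⊕ₗ M.carrier)), hK1,
          Or.inl (join11 (part_min_noMax hK hK2) (part_noMin_max hM1 hM)), ?_⟩
        exact ⟨(sumLexCongr' X.carrier Y.carrier eA eB).trans
          (OrderIso.sumLexAssoc _ _ _)⟩
    -- S00'
    · intro hdisc hne hnomin hnomax
      have hdA := discrete_sum_left hdisc
      have hdB := discrete_sum_right hdisc
      have hnominA : ∀ a : X.carrier, ∃ b, b < a := nomin_left hnomin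
      have hnomaxB : ∀ b : Y.carrier, ∃ b', b < b' := nomax_right hnomax
      by_cases hAmax : ∃ a : X.carrier, ∀ x, x ≤ a
      · obtain ⟨am, ham⟩ := hAmax
        have hBmin : ∃ m : Y.carrier, ∀ y, m ≤ y := junction_min hdisc ham hEB.some
        obtain ⟨L1, L, hL1, hL, ⟨eA⟩⟩ := ihX.2.1 hdA hnominA ⟨am, ham⟩
        obtain ⟨M, M2, hM, hM2, ⟨eB⟩⟩ := ihY.1 hdB hBmin hnomaxB
        refine ⟨L1, BLinOrd.of (L.carrier ⊕ₗ M.carrier), M2, hL1,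
          dLOfp11_sum' hL hM, hM2, ?_⟩
        refine ⟨(sumLexCongr' X.carrier Y.carrier eA eB).trans ?_⟩
        exact (OrderIso.sumLexAssoc _ L.carrier _).trans
          (sumLexCongr' _ _ (OrderIso.refl _) (OrderIso.sumLexAssoc L.carrier M.carrier _).symm)
      · have hAnomax : ∀ a : X.carrier, ∃ x, a < x := by
          intro a
          by_contra ha
          push_neg at ha
          exact hAmax ⟨a, fun x => ha x⟩
        have hBnomin : ∀ b : Y.carrier, ∃ b', b' < b := by
          intro b
          by_contra hb
          push_neg at hb
          obtain ⟨am, ham⟩ := junction_max hdisc (fun y => hb y) hEA.some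
          obtain ⟨x, hx⟩ := hAnomax am
          exact absurd hx (ham x).not_gt
        obtain ⟨K1, K, K2, hK1, hK, hK2, ⟨eA⟩⟩ := ihX.2.2 hdA hEA hnominA hAnomax
        obtain ⟨M1, M, M2, hM1, hM, hM2, ⟨eB⟩⟩ := ihY.2.2 hdB hEB hBnomin hnomaxB
        refine ⟨K1, BLinOrd.of ((K.carrier ⊕ₗ (ℕ ×ₗ K2.carrier)) ⊕ₗ
          ((ℕᵒᵈ ×ₗ M1.carrier) ⊕ₗ M.carrier)), M2, hK1,
          Or.inl (join11 (part_min_noMax hK hK2) (part_noMin_max hM1 hM)), hM2, ?_⟩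
        refine ⟨(sumLexCongr' X.carrier Y.carrier eA eB).trans ?_⟩
        exact (OrderIso.sumLexAssoc _ _ _).trans
          (sumLexCongr' _ _ (OrderIso.refl _) (shuffle4 _ _ _ _))
  | @mulOmega X hX ih =>
    refine ⟨?_, ?_, ?_⟩
    · -- S10'
      intro hdisc hmin hnomax
      obtain ⟨mm, hmm⟩ := hmin
      have hdZ := discrete_of_natProd hdisc
      have hminZ := natProd_min_extract hmm
      obtain ⟨z0, hz0⟩ := hminZ
      have hmaxZ := natProd_link_min hdisc hz0
      refine ⟨BLinOrd.of (Fin 0), X, Or.inr isEmpty_of_fin0, ⟨hX, hdZ, ⟨z0, hz0⟩, hmaxZ⟩,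
        ⟨(emptySumIso (Fin 0) (ℕ ×ₗ X.carrier) inferInstance).symm⟩⟩
    · -- S01' : impossible, no maximum
      intro _ _ hmax
      obtain ⟨m, hm⟩ := hmax
      obtain ⟨q, hq⟩ := natProd_noMax m
      exact absurd hq (hm q).not_gt
    · -- S00'
      intro hdisc hne hnomin hnomax
      have hEZ : Nonempty X.carrier := ⟨(ofLex hne.some).2⟩
      have hdZ := discrete_of_natProd hdisc
      have hnominZ : ∀ z : X.carrier, ∃ y, y < z := by
        intro z
        by_contra hz
        push_neg at hz
        obtain ⟨y, hy⟩ := hnomin (toLex (0, z))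
        exact absurd (natProd_min (fun x => hz x) y) hy.not_ge
      have hnomaxZ : ∀ z : X.carrier, ∃ y, z < y := by
        intro z
        by_contra hz
        push_neg at hz
        obtain ⟨b, hb⟩ := natProd_link_max hdisc (fun x => hz x)
        obtain ⟨y, hy⟩ := hnominZ b
        exact absurd (hb y) hy.not_ge
      obtain ⟨K1, K, K2, hK1, hK, hK2, ⟨eZ⟩⟩ := ih.2.2 hdZ hEZ hnominZ hnomaxZ
      refine ⟨K1, BLinOrd.of (Fin 0),
        BLinOrd.of ((K.carrier ⊕ₗ (ℕ ×ₗ K2.carrier)) ⊕ₗ ((ℕᵒᵈ ×ₗ K1.carrier) ⊕ₗ (Fin 0))),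
        hK1, Or.inr isEmpty_of_fin0,
        join11 (part_min_noMax hK hK2)
          (part_noMin_max (M := BLinOrd.of (Fin 0)) hK1 (Or.inr isEmpty_of_fin0)), ?_⟩
      refine ⟨(prodLexCongr _ ℕ eZ).trans ((omegaShiftIso _ _).trans ?_)⟩
      refine (sumLexCongr' _ _ (OrderIso.refl _)
        ((prodLexCongr _ ℕ (sumLexCongr' _ _ (OrderIso.refl _)
          (sumEmptyIso _ (Fin 0) inferInstance).symm)).trans
        (emptySumIso (Fin 0) _ inferInstance).symm))
  | @mulOmegaStar X hX ih =>
    refine ⟨?_, ?_, ?_⟩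
    · -- S10' : impossible, no minimum
      intro _ hmin _
      obtain ⟨m, hm⟩ := hmin
      obtain ⟨q, hq⟩ := dualNatProd_noMin m
      exact absurd hq (hm q).not_gt
    · -- S01'
      intro hdisc hnomin hmax
      obtain ⟨mm, hmm⟩ := hmax
      have hdZ := discrete_of_dualNatProd hdisc
      have hmaxZ := dualNatProd_max_extract hmm
      obtain ⟨z0, hz0⟩ := hmaxZ
      have hminZ := dualNatProd_link_max hdisc hz0
      refine ⟨X, BLinOrd.of (Fin 0), ⟨hX, hdZ, hminZ, ⟨z0, hz0⟩⟩, Or.inr isEmpty_of_fin0,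
        ⟨(sumEmptyIso (ℕᵒᵈ ×ₗ X.carrier) (Fin 0) inferInstance).symm⟩⟩
    · -- S00'
      intro hdisc hne hnomin hnomax
      have hEZ : Nonempty X.carrier := ⟨(ofLex hne.some).2⟩
      have hdZ := discrete_of_dualNatProd hdisc
      have hnomaxZ : ∀ z : X.carrier, ∃ y, z < y := by
        intro z
        by_contra hz
        push_neg at hz
        obtain ⟨y, hy⟩ := hnomax (toLex (OrderDual.toDual 0, z))
        exact absurd (dualNatProd_max (fun x => hz x) y) hy.not_ge
      have hnominZ : ∀ z : X.carrier, ∃ y, y < z := by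
        intro z
        by_contra hz
        push_neg at hz
        obtain ⟨b, hb⟩ := dualNatProd_link_min hdisc (fun x => hz x)
        obtain ⟨y, hy⟩ := hnomaxZ b
        exact absurd (hb y) hy.not_ge
      obtain ⟨K1, K, K2, hK1, hK, hK2, ⟨eZ⟩⟩ := ih.2.2 hdZ hEZ hnominZ hnomaxZ
      refine ⟨BLinOrd.of ((K.carrier ⊕ₗ (ℕ ×ₗ K2.carrier)) ⊕ₗ ((ℕᵒᵈ ×ₗ K1.carrier) ⊕ₗ (Fin 0))),
        K, K2, join11 (part_min_noMax hK hK2)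
          (part_noMin_max (M := BLinOrd.of (Fin 0)) hK1 (Or.inr isEmpty_of_fin0)),
        hK, hK2, ?_⟩
      refine ⟨(prodLexCongr _ ℕᵒᵈ eZ).trans ((omegaStarShiftIso _ _).trans ?_)⟩
      exact sumLexCongr' _ _
        ((prodLexCongr _ ℕᵒᵈ (sumLexCongr' _ _ (OrderIso.refl _)
          (sumEmptyIso _ (Fin 0) inferInstance).symm)))
        (OrderIso.refl _)

end Master


/-- a nonempty discrete finitely presented linear order with no minimum and
with a maximum is isomorphic to `L₁·ω* + L₂` with `L₁ ∈ dLO_fp¹¹` and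
`L₂ ∈ dLO_fp¹¹ ∪ {𝟎}`. -/
theorem dLOfp01_structure (X : BLinOrd) (hne : Nonempty X.carrier) (hfp : LOfp X)
    (hdisc : IsDiscreteLO X.carrier)
    (hnomin : ∀ a : X.carrier, ∃ b, b < a)
    (hmax : ∃ m : X.carrier, ∀ x, x ≤ m) :
    ∃ L1 L2 : BLinOrd, dLOfp11 L1 ∧ (dLOfp11 L2 ∨ IsEmpty L2.carrier) ∧
      Nonempty (X.carrier ≃o ((ℕᵒᵈ ×ₗ L1.carrier) ⊕ₗ L2.carrier)) := by
  exact (masterLOfp hfp).2.1 hdisc hnomin hmax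
end
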